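/- arXiv:2312.00904 — 8 statements merged into one kernel-verified Lean document; each statement's English description precedes it below -/
import Mathlib

section
/- Let ζ be a probability measure on ℝ absolutely continuous with respect to Lebesgue measure, and let (Sₙ) be a sequence of Borel-measurable functions Sₙ : ℝ → ℝ uniformly bounded by 1. Define fₙ(x) := x · ∫ Sₙ(x + z) dζ(z). Then the family (fₙ) is equicontinuous at every point x: for every x and ε > 0 there is δ > 0 such that |fₙ(x + h) − fₙ(x)| < ε for all n and all |h| < δ, provided x ranges in a bounded set. -/
open MeasureTheory

/-- Equicontinuity of the averaged price functions `fₙ(x) = x ∫ Sₙ(x+z) dζ(z)`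
at every point of a compact interval, for `ζ ≪ λ` and `|Sₙ| ≤ 1`. -/
theorem equicontinuity_of_averaged_prices
    (ζ : Measure ℝ) [IsProbabilityMeasure ζ]
    (hac : ζ ≪ (volume : Measure ℝ))
    (S : ℕ → ℝ → ℝ)
    (hmeas : ∀ n, Measurable (S n))
    (hbdd : ∀ n y, |S n y| ≤ 1)
    (a b : ℝ) :
    ∀ x ∈ Set.Icc a b, ∀ ε > 0, ∃ δ > 0, ∀ (n : ℕ) (h : ℝ), |h| < δ →
      |(x + h) * (∫ z, S n (x + h + z) ∂ζ) - x * (∫ z, S n (x + z) ∂ζ)| < ε := by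
  intro x hx ε hε
  -- the density of ζ with respect to Lebesgue measure
  set g' : ℝ → ℝ := fun z => (ζ.rnDeriv volume z).toReal with hg'def
  have hg'm : Measurable g' := (Measure.measurable_rnDeriv ζ volume).ennreal_toReal
  have hg'int : Integrable g' volume := Measure.integrable_toReal_rnDeriv
  have hg'nonneg : ∀ u, 0 ≤ g' u := fun u => ENNReal.toReal_nonneg
  -- representation of the averaged integral via the translated density
  have hrep : ∀ (n : ℕ) (c : ℝ), ∫ z, S n (c + z) ∂ζ = ∫ u, g' (u - c) * S n u := by
    intro n c
    rw [← integral_rnDeriv_smul hac (f := fun z => S n (c + z))]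
    simp only [smul_eq_mul]
    rw [← integral_sub_right_eq_self (fun z => g' z * S n (c + z)) c]
    refine integral_congr_ae (Filter.Eventually.of_forall fun u => ?_)
    have : c + (u - c) = u := by ring
    simp [this]
  -- integrability of the translated products
  have hic : ∀ (n : ℕ) (c : ℝ), Integrable (fun u => g' (u - c) * S n u) volume := by
    intro n c
    refine (hg'int.comp_sub_right c).mono'
      (((hg'm.comp (measurable_id.sub_const c)).mul (hmeas n)).aestronglyMeasurable) ?_
    filter_upwards with u
    rw [norm_mul]
    calc ‖g' (u - c)‖ * ‖S n u‖ ≤ ‖g' (u - c)‖ * 1 := by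
          gcongr
          simpa [Real.norm_eq_abs] using hbdd n u
      _ = g' (u - c) := by rw [mul_one, Real.norm_of_nonneg (hg'nonneg _)]
  -- the translated densities as a continuous family in L¹
  have hg'mem : MemLp g' 1 volume := memLp_one_iff_integrable.mpr hg'int
  set g₁ : Lp ℝ 1 (volume : Measure ℝ) := hg'mem.toLp g' with hg₁
  set Φ : ℝ → Lp ℝ 1 (volume : Measure ℝ) := fun c => Lp.compMeasurePreserving
      (⟨fun u => u - c, by continuity⟩ : C(ℝ, ℝ))
      (measurePreserving_sub_right volume c) g₁ with hΦ
  have hΦcont : Continuous Φ := by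
    apply Continuous.compMeasurePreservingLp continuous_const
    · apply ContinuousMap.continuous_of_continuous_uncurry
      exact continuous_snd.sub continuous_fst
    · norm_num
  have hΦae : ∀ c, (Φ c : ℝ → ℝ) =ᵐ[volume] fun u => g' (u - c) := by
    intro c
    refine (Lp.coeFn_compMeasurePreserving g₁ _).trans ?_
    exact (measurePreserving_sub_right volume c).quasiMeasurePreserving.ae_eq_comp
      hg'mem.coeFn_toLp
  -- key estimate: difference of averaged integrals is controlled by the L¹ distance
  have key : ∀ (n : ℕ) (c : ℝ),
      |(∫ z, S n (c + z) ∂ζ) - ∫ z, S n (x + z) ∂ζ| ≤ ‖Φ c - Φ x‖ := by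
    intro n c
    rw [hrep n c, hrep n x, ← integral_sub (hic n c) (hic n x)]
    have hsub : (↑(Φ c - Φ x) : ℝ → ℝ) =ᵐ[volume] fun u => g' (u - c) - g' (u - x) :=
      (Lp.coeFn_sub (Φ c) (Φ x)).trans (((hΦae c).sub (hΦae x)))
    calc |∫ u, (g' (u - c) * S n u - g' (u - x) * S n u)|
        ≤ ∫ u, ‖g' (u - c) * S n u - g' (u - x) * S n u‖ := by
          simpa [Real.norm_eq_abs] using
            norm_integral_le_integral_norm (μ := (volume : Measure ℝ))
              (fun u => g' (u - c) * S n u - g' (u - x) * S n u)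
      _ ≤ ∫ u, |g' (u - c) - g' (u - x)| := by
          refine integral_mono ((hic n c).sub (hic n x)).norm
            (((hg'int.comp_sub_right c).sub (hg'int.comp_sub_right x)).abs) fun u => ?_
          rw [← sub_mul, Real.norm_eq_abs, abs_mul]
          calc |g' (u - c) - g' (u - x)| * |S n u|
              ≤ |g' (u - c) - g' (u - x)| * 1 := by gcongr; exact hbdd n u
            _ = |g' (u - c) - g' (u - x)| := mul_one _
      _ = ∫ u, ‖(↑(Φ c - Φ x) : ℝ → ℝ) u‖ := by
          refine integral_congr_ae ?_
          filter_upwards [hsub] with u hu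
          rw [hu, Real.norm_eq_abs]
      _ = ‖Φ c - Φ x‖ := (L1.norm_eq_integral_norm _).symm
  -- bound on the averaged integrals themselves
  have hI : ∀ (n : ℕ) (c : ℝ), |∫ z, S n (c + z) ∂ζ| ≤ 1 := by
    intro n c
    rw [← Real.norm_eq_abs]
    calc ‖∫ z, S n (c + z) ∂ζ‖ ≤ 1 * (ζ Set.univ).toReal :=
          norm_integral_le_of_norm_le_const (Filter.Eventually.of_forall fun z => by
            rw [Real.norm_eq_abs]; exact hbdd n (c + z))
      _ = 1 := by simp
  -- bound on |x|
  set M : ℝ := |a| + |b| + 1 with hM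
  have hMpos : 0 < M := by positivity
  have hxM : |x| ≤ M := by
    rw [abs_le]
    constructor <;>
      [nlinarith [hx.1, neg_abs_le a, abs_nonneg b];
       nlinarith [hx.2, le_abs_self b, abs_nonneg a]]
  -- continuity of Φ at x gives δ₁
  have hcont := hΦcont.continuousAt (x := x)
  rw [Metric.continuousAt_iff] at hcont
  obtain ⟨δ₁, hδ₁pos, hδ₁⟩ := hcont (ε / (2 * M)) (by positivity)
  refine ⟨min δ₁ (ε / 2), by positivity, fun n h hh => ?_⟩
  have hh1 : |h| < δ₁ := lt_of_lt_of_le hh (min_le_left _ _)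
  have hh2 : |h| < ε / 2 := lt_of_lt_of_le hh (min_le_right _ _)
  have hd : ‖Φ (x + h) - Φ x‖ < ε / (2 * M) := by
    have := hδ₁ (show dist (x + h) x < δ₁ by rw [Real.dist_eq]; simpa using hh1)
    rwa [dist_eq_norm] at this
  set I₁ := ∫ z, S n (x + h + z) ∂ζ with hI₁
  set I₂ := ∫ z, S n (x + z) ∂ζ with hI₂
  have hA : |I₁ - I₂| ≤ ε / (2 * M) := le_trans (key n (x + h)) hd.le
  have hB : |x| * |I₁ - I₂| ≤ M * (ε / (2 * M)) :=
    mul_le_mul hxM hA (abs_nonneg _) hMpos.le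
  have hMeq : M * (ε / (2 * M)) = ε / 2 := by
    field_simp
  have hC : |h| * |I₁| < ε / 2 := by
    calc |h| * |I₁| ≤ |h| * 1 := by gcongr; exact hI n (x + h)
      _ = |h| := mul_one _
      _ < ε / 2 := hh2
  calc |(x + h) * I₁ - x * I₂| = |x * (I₁ - I₂) + h * I₁| := by ring_nf
    _ ≤ |x * (I₁ - I₂)| + |h * I₁| := abs_add_le _ _
    _ = |x| * |I₁ - I₂| + |h| * |I₁| := by rw [abs_mul, abs_mul]
    _ < ε / 2 + ε / 2 := by
        have := hB.trans_eq hMeq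
        linarith
    _ = ε := by ring
end

section
/- Suppose a sequence of probability measures (μₙ) on (ℝ, Borel) converges weakly to a probability measure μ, and let F be a family of functions from ℝ to ℝ that is uniformly bounded and pointwise equicontinuous. Then sup_{f ∈ F} |∫ f dμₙ − ∫ f dμ| → 0 as n → ∞. -/
open MeasureTheory Filter

lemma rao_aux_tight (μ : Measure ℝ) [IsProbabilityMeasure μ] {ε : ℝ} (hε : 0 < ε) :
    ∃ A : ℝ, 0 ≤ A ∧ (μ {x | A < |x|}).toReal < ε := by
  have hmeasset : ∀ c : ℝ, MeasurableSet {x : ℝ | c < |x|} :=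
    fun c => measurableSet_lt measurable_const continuous_abs.measurable
  have hmeas : ∀ n : ℕ, NullMeasurableSet {x : ℝ | (n : ℝ) < |x|} μ :=
    fun n => (hmeasset _).nullMeasurableSet
  have hanti : Antitone (fun n : ℕ => {x : ℝ | (n : ℝ) < |x|}) := by
    intro m n hmn x hx
    have hc : (m : ℝ) ≤ (n : ℝ) := Nat.cast_le.mpr hmn
    exact lt_of_le_of_lt hc hx
  have hint : (⋂ n : ℕ, {x : ℝ | (n : ℝ) < |x|}) = ∅ := by
    ext x
    simp only [Set.mem_iInter, Set.mem_setOf_eq, Set.mem_empty_iff_false, iff_false, not_forall,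
      not_lt]
    obtain ⟨n, hn⟩ := exists_nat_gt |x|
    exact ⟨n, hn.le⟩
  have htend := MeasureTheory.tendsto_measure_iInter_atTop hmeas hanti ⟨0, measure_ne_top μ _⟩
  rw [hint] at htend
  simp only [measure_empty] at htend
  have hev := htend.eventually_lt_const (show (0 : ENNReal) < ENNReal.ofReal ε from
    ENNReal.ofReal_pos.mpr hε)
  obtain ⟨n, hn⟩ := hev.exists
  exact ⟨n, n.cast_nonneg, ENNReal.toReal_lt_of_lt_ofReal hn⟩

lemma rao_aux_floor {ε a b : ℝ} (hε : 0 < ε) (h : ⌊a / ε⌋ = ⌊b / ε⌋) : |a - b| < ε := by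
  have h1 := Int.floor_le (a / ε)
  have h2 := Int.lt_floor_add_one (a / ε)
  have h3 := Int.floor_le (b / ε)
  have h4 := Int.lt_floor_add_one (b / ε)
  rw [h] at h1 h2
  have ha : a / ε * ε = a := div_mul_cancel₀ a hε.ne'
  have hb : b / ε * ε = b := div_mul_cancel₀ b hε.ne'
  rw [abs_sub_lt_iff]
  constructor <;> nlinarith [mul_lt_mul_of_pos_right (sub_lt_iff_lt_add.mpr h2) hε,
    mul_lt_mul_of_pos_right (sub_lt_iff_lt_add.mpr h4) hε,
    mul_le_mul_of_nonneg_right h1 hε.le, mul_le_mul_of_nonneg_right h3 hε.le]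

lemma rao_aux_integrable {f : ℝ → ℝ} {C : ℝ} (hf : Continuous f) (hC : ∀ y, |f y| ≤ C)
    (ν : Measure ℝ) [IsFiniteMeasure ν] : Integrable f ν :=
  Integrable.mono' (integrable_const C) hf.aestronglyMeasurable
    (Filter.Eventually.of_forall fun x => by rw [Real.norm_eq_abs]; exact hC x)

/-- Rao's theorem: if `μₙ → μ` weakly and `F` is a uniformly bounded, pointwise
equicontinuous family of functions, then `sup_{f ∈ F} |∫ f dμₙ − ∫ f dμ| → 0`. -/
theorem rao_uniform_weak_convergence
    (μseq : ℕ → Measure ℝ) (μ : Measure ℝ)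
    [∀ n, IsProbabilityMeasure (μseq n)] [IsProbabilityMeasure μ]
    (hweak : ∀ f : ℝ → ℝ, Continuous f → (∃ M, ∀ y, |f y| ≤ M) →
      Tendsto (fun n => ∫ y, f y ∂(μseq n)) atTop (nhds (∫ y, f y ∂μ)))
    (F : Set (ℝ → ℝ))
    (M : ℝ) (hM : ∀ f ∈ F, ∀ y, |f y| ≤ M)
    (hequi : ∀ y : ℝ, ∀ ε > 0, ∃ δ > 0, ∀ f ∈ F, ∀ y' : ℝ,
      |y' - y| < δ → |f y' - f y| < ε) :
    ∀ ε > 0, ∃ N : ℕ, ∀ n ≥ N, ∀ f ∈ F,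
      |(∫ y, f y ∂(μseq n)) - ∫ y, f y ∂μ| < ε := by
  intro ε hε
  rcases F.eq_empty_or_nonempty with hFe | ⟨f₀, hf₀⟩
  · exact ⟨0, fun n _ f hf => by rw [hFe] at hf; exact absurd hf (Set.notMem_empty f)⟩
  have hM0 : 0 ≤ M := le_trans (abs_nonneg _) (hM f₀ hf₀ 0)
  set ε' : ℝ := ε / (8 * (M + 1)) with hε'def
  have hε' : 0 < ε' := div_pos hε (by positivity)
  have hεeq : ε = 8 * (M + 1) * ε' := by
    rw [hε'def]; field_simp
  -- every member of F is continuous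
  have hcont : ∀ f ∈ F, Continuous f := by
    intro f hf
    rw [Metric.continuous_iff]
    intro y e he
    obtain ⟨δ, hδ, h⟩ := hequi y e he
    exact ⟨δ, hδ, fun y' hy' => by
      rw [Real.dist_eq]; exact h f hf y' (by rwa [Real.dist_eq] at hy')⟩
  -- tightness
  obtain ⟨A, hA0, hAμ⟩ := rao_aux_tight μ hε'
  set K : Set ℝ := Set.Icc (-(A + 1)) (A + 1) with hKdef
  have hKmeas : MeasurableSet K := measurableSet_Icc
  -- cutoff function
  set h : ℝ → ℝ := fun x => min 1 (max 0 (|x| - A)) with hhdef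
  have hhcont : Continuous h :=
    continuous_const.min (continuous_const.max (continuous_abs.sub continuous_const))
  have hh0 : ∀ x, 0 ≤ h x := fun x => le_min zero_le_one (le_max_left _ _)
  have hh1 : ∀ x, h x ≤ 1 := fun x => min_le_left _ _
  have hhb : ∀ x, |h x| ≤ 1 := fun x => abs_le.mpr ⟨by linarith [hh0 x], hh1 x⟩
  -- h = 1 outside K
  have hhK : ∀ x ∈ Kᶜ, h x = 1 := by
    intro x hx
    have hx' : A + 1 < |x| := by
      rw [Set.mem_compl_iff, hKdef, Set.mem_Icc, not_and_or] at hx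
      rcases hx with hx | hx <;> push_neg at hx
      · exact lt_abs.mpr (Or.inr (by linarith))
      · exact lt_abs.mpr (Or.inl hx)
    exact min_eq_left (le_max_of_le_right (by linarith))
  -- h ≤ indicator of {A < |x|}
  have hAmeas : MeasurableSet {x : ℝ | A < |x|} :=
    measurableSet_lt measurable_const continuous_abs.measurable
  have hhle : ∀ x, h x ≤ Set.indicator {x : ℝ | A < |x|} (fun _ => (1 : ℝ)) x := by
    intro x
    by_cases hx : A < |x|
    · rw [Set.indicator_of_mem (show x ∈ {x : ℝ | A < |x|} from hx)]; exact hh1 x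
    · push_neg at hx
      have : h x = 0 := by
        rw [hhdef]
        simp only
        rw [max_eq_left (by linarith), min_eq_right (by norm_num)]
      rw [this]
      exact Set.indicator_nonneg (fun _ _ => zero_le_one) x
  -- ∫ h dμ < ε'
  have hμh : ∫ x, h x ∂μ < ε' := by
    calc ∫ x, h x ∂μ ≤ ∫ x, Set.indicator {x : ℝ | A < |x|} (fun _ => (1 : ℝ)) x ∂μ := by
          apply integral_mono (rao_aux_integrable hhcont hhb μ)
            ((integrable_const (1 : ℝ)).indicator hAmeas) hhle
      _ = (μ {x : ℝ | A < |x|}).toReal • (1 : ℝ) := integral_indicator_const 1 hAmeas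
      _ = (μ {x : ℝ | A < |x|}).toReal := smul_eq_mul .. |>.trans (mul_one _)
      _ < ε' := hAμ
  -- (ν Kᶜ).toReal ≤ ∫ h dν for probability measures ν
  have hKc : ∀ ν : Measure ℝ, IsProbabilityMeasure ν → (ν Kᶜ).toReal ≤ ∫ x, h x ∂ν := by
    intro ν hν
    haveI := hν
    have : (ν Kᶜ).toReal = ∫ x, Set.indicator Kᶜ (fun _ => (1 : ℝ)) x ∂ν := by
      rw [integral_indicator_const 1 hKmeas.compl, smul_eq_mul, mul_one]; rfl
    rw [this]
    apply integral_mono ((integrable_const (1 : ℝ)).indicator hKmeas.compl)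
      (rao_aux_integrable hhcont hhb ν)
    intro x
    by_cases hx : x ∈ Kᶜ
    · rw [Set.indicator_of_mem hx, hhK x hx]
    · rw [Set.indicator_of_notMem hx]; exact hh0 x
  have hμKc : (μ Kᶜ).toReal < ε' := lt_of_le_of_lt (hKc μ inferInstance) hμh
  -- equicontinuity data
  choose δ hδpos hδ using fun y => hequi y ε' hε'
  -- finite subcover of K
  obtain ⟨t, htK, hcover⟩ := (isCompact_Icc : IsCompact K).elim_nhds_subcover
    (fun y => Metric.ball y (δ y)) (fun y _ => Metric.ball_mem_nhds y (hδpos y))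
  -- discretization map
  set Φ : (ℝ → ℝ) → (↥t → ℤ) := fun f i => ⌊f i / ε'⌋ with hΦdef
  set S : Set (↥t → ℤ) := Φ '' F with hSdef
  have hSfin : S.Finite := by
    apply Set.Finite.subset (Set.Finite.pi (fun _ : ↥t => Set.finite_Icc ⌊-M / ε'⌋ ⌊M / ε'⌋))
    rintro v ⟨f, hf, rfl⟩
    intro i _
    have hb := abs_le.mp (hM f hf i)
    constructor
    · exact Int.floor_mono ((div_le_div_iff_of_pos_right hε').mpr hb.1)
    · exact Int.floor_mono ((div_le_div_iff_of_pos_right hε').mpr hb.2)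
  -- representatives
  have hrepex : ∀ v : ↥t → ℤ, ∃ g ∈ F, v ∈ S → Φ g = v := by
    intro v
    by_cases hv : v ∈ S
    · obtain ⟨g, hg, hgv⟩ := hv
      exact ⟨g, hg, fun _ => hgv⟩
    · exact ⟨f₀, hf₀, fun hc => absurd hc hv⟩
  choose rep hrepF hrepΦ using hrepex
  -- comparison of f with its representative, pointwise
  have hptwise : ∀ f ∈ F, ∀ x : ℝ,
      |f x - rep (Φ f) x| ≤ 3 * ε' + Set.indicator Kᶜ (fun _ => 2 * M) x := by
    intro f hf x
    set g := rep (Φ f) with hgdef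
    have hgF : g ∈ F := hrepF _
    have hΦg : Φ g = Φ f := hrepΦ _ ⟨f, hf, rfl⟩
    by_cases hx : x ∈ K
    · obtain ⟨y, hyt, hxy⟩ := Set.mem_iUnion₂.mp (hcover hx)
      have hxy' : |x - y| < δ y := by rwa [Metric.mem_ball, Real.dist_eq] at hxy
      have h1 : |f x - f y| < ε' := hδ y f hf x hxy'
      have h2 : |g x - g y| < ε' := hδ y g hgF x hxy'
      have h3 : |g y - f y| < ε' := rao_aux_floor hε' (congrFun hΦg ⟨y, hyt⟩)
      have hind : Set.indicator Kᶜ (fun _ => 2 * M) x = 0 :=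
        Set.indicator_of_notMem (by simpa using hx) _
      rw [hind]
      have t1 : |f x - g x| ≤ |f x - f y| + |f y - g x| := abs_sub_le _ _ _
      have t2 : |f y - g x| ≤ |f y - g y| + |g y - g x| := abs_sub_le _ _ _
      have t3 : |f y - g y| = |g y - f y| := abs_sub_comm _ _
      have t4 : |g y - g x| = |g x - g y| := abs_sub_comm _ _
      linarith
    · have hind : Set.indicator Kᶜ (fun _ => 2 * M) x = 2 * M :=
        Set.indicator_of_mem (by simpa using hx) _
      rw [hind]
      have := abs_sub (f x) (g x)
      have hfb := hM f hf x
      have hgb := hM g hgF x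
      have habs : |f x - g x| ≤ |f x| + |g x| := abs_sub _ _
      linarith [hε'.le]
  -- integral comparison
  have hkey : ∀ f ∈ F, ∀ ν : Measure ℝ, IsProbabilityMeasure ν →
      |(∫ y, f y ∂ν) - ∫ y, rep (Φ f) y ∂ν| ≤ 3 * ε' + 2 * M * (ν Kᶜ).toReal := by
    intro f hf ν hν
    haveI := hν
    set g := rep (Φ f) with hgdef
    have hgF : g ∈ F := hrepF _
    have hif : Integrable f ν := rao_aux_integrable (hcont f hf) (hM f hf) ν
    have hig : Integrable g ν := rao_aux_integrable (hcont g hgF) (hM g hgF) ν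
    rw [← integral_sub hif hig]
    have hrhs_int : Integrable
        (fun x => 3 * ε' + Set.indicator Kᶜ (fun _ => 2 * M) x) ν :=
      (integrable_const (3 * ε')).add ((integrable_const (2 * M)).indicator hKmeas.compl)
    calc |∫ y, (f y - g y) ∂ν| ≤ ∫ y, |f y - g y| ∂ν := by
          rw [← Real.norm_eq_abs]
          exact (norm_integral_le_integral_norm _).trans_eq (by simp [Real.norm_eq_abs])
      _ ≤ ∫ y, (3 * ε' + Set.indicator Kᶜ (fun _ => 2 * M) y) ∂ν :=
          integral_mono (hif.sub hig).abs hrhs_int (fun x => hptwise f hf x)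
      _ = 3 * ε' + 2 * M * (ν Kᶜ).toReal := by
          rw [integral_add (integrable_const _) ((integrable_const (2 * M)).indicator
            hKmeas.compl), integral_const, integral_indicator_const _ hKmeas.compl]
          simp [measure_univ, mul_comm]; left; rfl
  -- eventual smallness
  have hE1 : ∀ᶠ n in atTop, ∫ x, h x ∂(μseq n) < 2 * ε' :=
    (hweak h hhcont ⟨1, hhb⟩).eventually_lt_const (by linarith)
  have hE2 : ∀ᶠ n in atTop, ∀ v ∈ S,
      |(∫ y, rep v y ∂(μseq n)) - ∫ y, rep v y ∂μ| < ε' := by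
    rw [eventually_all_finite hSfin]
    intro v _
    have hgF : rep v ∈ F := hrepF v
    have := hweak (rep v) (hcont _ hgF) ⟨M, hM _ hgF⟩
    have := Metric.tendsto_nhds.mp this ε' hε'
    filter_upwards [this] with n hn
    rwa [Real.dist_eq] at hn
  rw [← eventually_atTop]
  filter_upwards [hE1, hE2] with n h1 h2
  intro f hf
  have hΦfS : Φ f ∈ S := ⟨f, hf, rfl⟩
  set g := rep (Φ f) with hgdef
  have hnKc : ((μseq n) Kᶜ).toReal < 2 * ε' :=
    lt_of_le_of_lt (hKc (μseq n) inferInstance) h1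
  have k1 : |(∫ y, f y ∂(μseq n)) - ∫ y, g y ∂(μseq n)| ≤ 3 * ε' + 2 * M * ((μseq n) Kᶜ).toReal :=
    hkey f hf (μseq n) inferInstance
  have k2 : |(∫ y, g y ∂(μseq n)) - ∫ y, g y ∂μ| < ε' := h2 (Φ f) hΦfS
  have k3 : |(∫ y, f y ∂μ) - ∫ y, g y ∂μ| ≤ 3 * ε' + 2 * M * ((μ) Kᶜ).toReal :=
    hkey f hf μ inferInstance
  have tri : |(∫ y, f y ∂(μseq n)) - ∫ y, f y ∂μ| ≤
      |(∫ y, f y ∂(μseq n)) - ∫ y, g y ∂(μseq n)| +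
      |(∫ y, g y ∂(μseq n)) - ∫ y, g y ∂μ| +
      |(∫ y, f y ∂μ) - ∫ y, g y ∂μ| := by
    have t1 := abs_sub_le (∫ y, f y ∂(μseq n)) (∫ y, g y ∂(μseq n)) (∫ y, f y ∂μ)
    have t2 := abs_sub_le (∫ y, g y ∂(μseq n)) (∫ y, g y ∂μ) (∫ y, f y ∂μ)
    have t3 : |(∫ y, g y ∂μ) - ∫ y, f y ∂μ| = |(∫ y, f y ∂μ) - ∫ y, g y ∂μ| := abs_sub_comm _ _
    linarith
  have hmul1 : 2 * M * ((μseq n) Kᶜ).toReal ≤ 2 * M * (2 * ε') :=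
    mul_le_mul_of_nonneg_left hnKc.le (by linarith)
  have hmul2 : 2 * M * ((μ) Kᶜ).toReal ≤ 2 * M * ε' :=
    mul_le_mul_of_nonneg_left hμKc.le (by linarith)
  rw [hεeq]
  nlinarith
end

section
/- Let E_X be a finite set, ε ∈ (0, 1/|E_X|), and for each parameter θ in a metric space let u_θ : E_X → ℝ depend continuously on θ. Then the correspondence θ ↦ argmax { ∑_x p(x) u_θ(x) : p ∈ ΔE_X^ε } is upper hemicontinuous: for every θ there is a neighborhood U of θ such that for all θ' ∈ U the argmax set at θ' is contained in the argmax set at θ. -/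
open Finset

/-- The truncated simplex `ΔE_X^ε`. -/
def trSimplex (EX : Finset ℝ) (ε : ℝ) : Set (EX → ℝ) :=
  {p | (∀ x, ε ≤ p x ∧ p x ≤ 1) ∧ ∑ x, p x = 1}

lemma trSimplex_sum_le {EX : Finset ℝ} {ε : ℝ} (hε : 0 < ε)
    (w : EX → ℝ) (p : EX → ℝ) (hp : p ∈ trSimplex EX ε)
    (hpe : ∀ x : EX, (∃ y : EX, w x < w y) → p x = ε)
    (q : EX → ℝ) (hq : q ∈ trSimplex EX ε) :
    ∑ x : EX, q x * w x ≤ ∑ x : EX, p x * w x := by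
  haveI : Nonempty ↥EX := by
    rcases Finset.eq_empty_or_nonempty EX with h | h
    · subst h
      have := hp.2
      simp at this
    · exact h.to_subtype
  have hne : (Finset.univ : Finset ↥EX).Nonempty := Finset.univ_nonempty
  set M := Finset.univ.sup' hne w with hM
  have key : ∀ x : ↥EX, 0 ≤ (p x - q x) * (w x - M) := by
    intro x
    by_cases h : ∃ y : ↥EX, w x < w y
    · have h1 : p x = ε := hpe x h
      have h2 : ε ≤ q x := (hq.1 x).1
      have h3 : w x ≤ M := Finset.le_sup' w (Finset.mem_univ x)
      nlinarith
    · have hMx : M ≤ w x := by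
        apply Finset.sup'_le
        intro y _
        exact le_of_not_gt (fun hlt => h ⟨y, hlt⟩)
      have hx : w x = M := le_antisymm (Finset.le_sup' w (Finset.mem_univ x)) hMx
      simp [hx]
  have hsum : ∑ x : ↥EX, (p x - q x) * (w x - M)
      = ∑ x : ↥EX, p x * w x - ∑ x : ↥EX, q x * w x := by
    have expand : ∀ x : ↥EX,
        (p x - q x) * (w x - M) = (p x * w x - q x * w x) - (M * p x - M * q x) := by
      intro x; ring
    rw [Finset.sum_congr rfl (fun x _ => expand x), Finset.sum_sub_distrib,
      Finset.sum_sub_distrib, Finset.sum_sub_distrib, ← Finset.mul_sum, ← Finset.mul_sum,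
      hp.2, hq.2]
    ring
  have h0 : 0 ≤ ∑ x : ↥EX, (p x - q x) * (w x - M) :=
    Finset.sum_nonneg (fun x _ => key x)
  linarith [hsum ▸ h0]

lemma trSimplex_argmax_eq {EX : Finset ℝ} {ε : ℝ} (hε : 0 < ε)
    (w : EX → ℝ) (p : EX → ℝ) (hp : p ∈ trSimplex EX ε)
    (hmax : ∀ q ∈ trSimplex EX ε, ∑ x : EX, q x * w x ≤ ∑ x : EX, p x * w x)
    (x y : ↥EX) (hxy : w x < w y) : p x = ε := by
  classical
  by_contra h
  have hx : ε < p x := lt_of_le_of_ne (hp.1 x).1 (Ne.symm h)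
  have hne : x ≠ y := fun e => by rw [e] at hxy; exact lt_irrefl _ hxy
  set δ := p x - ε with hδ
  have hδpos : 0 < δ := by simp [hδ]; linarith
  set q : ↥EX → ℝ := fun z =>
    p z + (if z = y then δ else 0) - (if z = x then δ else 0) with hqdef
  have hpxy : p x + p y ≤ 1 := by
    have hsub : ({x, y} : Finset ↥EX) ⊆ Finset.univ := Finset.subset_univ _
    have hle : ∑ z ∈ ({x, y} : Finset ↥EX), p z ≤ ∑ z : ↥EX, p z :=
      Finset.sum_le_sum_of_subset_of_nonneg hsub
        (fun z _ _ => le_trans hε.le (hp.1 z).1)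
    rw [Finset.sum_pair hne, hp.2] at hle
    exact hle
  have hq : q ∈ trSimplex EX ε := by
    constructor
    · intro z
      have h1 := hp.1 z
      have hy1 := (hp.1 y).1
      have hx2 := (hp.1 x).2
      simp only [hqdef]
      split_ifs with hzy hzx hzx
      · exact absurd (hzx.symm.trans hzy) hne
      · subst hzy
        exact ⟨by linarith, by linarith⟩
      · subst hzx
        exact ⟨by linarith, by linarith⟩
      · exact ⟨by linarith [h1.1], by linarith [h1.2]⟩
    · have : ∑ z : ↥EX, q z
          = ∑ z : ↥EX, p z + ∑ z : ↥EX, (if z = y then δ else 0)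
            - ∑ z : ↥EX, (if z = x then δ else 0) := by
        simp only [hqdef]
        rw [Finset.sum_sub_distrib, Finset.sum_add_distrib]
      rw [this, hp.2, Finset.sum_ite_eq' Finset.univ y (fun _ => δ),
        Finset.sum_ite_eq' Finset.univ x (fun _ => δ)]
      simp
  have hval : ∑ z : ↥EX, q z * w z
      = ∑ z : ↥EX, p z * w z + δ * w y - δ * w x := by
    have expand : ∀ z : ↥EX, q z * w z
        = p z * w z + (if z = y then δ * w z else 0) - (if z = x then δ * w z else 0) := by
      intro z
      simp only [hqdef]
      split_ifs <;> ring
    rw [Finset.sum_congr rfl (fun z _ => expand z), Finset.sum_sub_distrib,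
      Finset.sum_add_distrib, Finset.sum_ite_eq' Finset.univ y (fun z => δ * w z),
      Finset.sum_ite_eq' Finset.univ x (fun z => δ * w z)]
    simp
  have := hmax q hq
  rw [hval] at this
  nlinarith

/-- Upper hemicontinuity of the argmax correspondence of a parametrised linear
objective over the truncated simplex. -/
theorem argmax_upper_hemicontinuous
    {Θ : Type*} [MetricSpace Θ]
    (EX : Finset ℝ) (hEX : EX.Nonempty) (ε : ℝ)
    (hε : 0 < ε) (hε' : ε < 1 / (EX.card : ℝ))
    (u : Θ → ℝ → ℝ)
    (hu : ∀ x : EX, Continuous fun θ => u θ (x : ℝ)) :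
    ∀ θ : Θ, ∃ U ∈ nhds θ, ∀ θ' ∈ U,
      {p ∈ trSimplex EX ε | ∀ q ∈ trSimplex EX ε,
          ∑ x : EX, q x * u θ' x ≤ ∑ x : EX, p x * u θ' x}
        ⊆ {p ∈ trSimplex EX ε | ∀ q ∈ trSimplex EX ε,
          ∑ x : EX, q x * u θ x ≤ ∑ x : EX, p x * u θ x} := by
  classical
  intro θ
  haveI : Nonempty ↥EX := hEX.to_subtype
  set S : Finset (↥EX × ↥EX) :=
    Finset.univ.filter (fun pr => u θ pr.1 < u θ pr.2) with hS
  refine ⟨⋂ pr ∈ S, {θ' | u θ' pr.1 < u θ' pr.2}, ?_, ?_⟩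
  · rw [Filter.biInter_finset_mem]
    intro pr hpr
    have hopen : IsOpen {θ' : Θ | u θ' pr.1 < u θ' pr.2} :=
      isOpen_lt (hu pr.1) (hu pr.2)
    exact hopen.mem_nhds (by simpa [hS] using (Finset.mem_filter.mp hpr).2)
  · intro θ' hθ' p hp
    obtain ⟨hps, hpm⟩ := hp
    refine ⟨hps, fun q hq => trSimplex_sum_le hε _ p hps ?_ q hq⟩
    rintro x ⟨y, hxy⟩
    have h' : u θ' x < u θ' y := by
      have := Set.mem_iInter₂.mp hθ' (x, y) (by simp [hS, hxy])
      exact this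
    exact trSimplex_argmax_eq hε _ p hps hpm x y h'
end

section
/- In any equilibrium of the discrete single-period Kyle game, the insider's demand is monotone in the observed true value: if ξ(vⁱ, {x}) > 0 and vⁱ < vʲ, then ξ(vʲ, E_X ∩ [x, ∞)) = 1; and if ξ(vⁱ, {x}) > 0 and vⁱ > vʲ, then ξ(vʲ, E_X ∩ (−∞, x]) = 1. -/
open Finset

/-- Average execution price `∫ S(x+z) ζ(dz)` for an insider order of size `x`. -/
noncomputable def avgPrice (EZ : Finset ℝ) (ζ : ℝ → ℝ) (S : ℝ → ℝ) (x : ℝ) : ℝ :=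
  ∑ z ∈ EZ, ζ z * S (x + z)

/-- The insider's expected gain from order `x` when the true value is `v`. -/
noncomputable def gain (EZ : Finset ℝ) (ζ : ℝ → ℝ) (S : ℝ → ℝ) (v x : ℝ) : ℝ :=
  x * (v - avgPrice EZ ζ S x)

/-- Probability that the total demand equals `y`. -/
noncomputable def pY (EV EX EZ : Finset ℝ) (ν ζ : ℝ → ℝ) (ξ : ℝ → ℝ → ℝ) (y : ℝ) : ℝ :=
  ∑ v ∈ EV, ∑ x ∈ EX, ∑ z ∈ EZ, if x + z = y then ν v * ξ v x * ζ z else 0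

/-- Joint expectation of the true value on the event that total demand is `y`. -/
noncomputable def pYV (EV EX EZ : Finset ℝ) (ν ζ : ℝ → ℝ) (ξ : ℝ → ℝ → ℝ) (y : ℝ) : ℝ :=
  ∑ v ∈ EV, ∑ x ∈ EX, ∑ z ∈ EZ, if x + z = y then ν v * ξ v x * ζ z * v else 0

/-- `ξ` is a behaviour strategy: `ξ(v,·)` is a probability vector on `E_X`. -/
def IsStrategy (EV EX : Finset ℝ) (ξ : ℝ → ℝ → ℝ) : Prop :=
  ∀ v ∈ EV, (∀ x ∈ EX, 0 ≤ ξ v x) ∧ ∑ x ∈ EX, ξ v x = 1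

/-- Kyle equilibrium of the single-period discrete game: `ξ(v,·)` is supported on
maximisers of the gain given `S`, and `S` satisfies rational pricing given `ξ`
at every total demand with positive probability. -/
def IsKyleEquilibrium (EV EX EZ : Finset ℝ) (ν ζ : ℝ → ℝ)
    (ξ : ℝ → ℝ → ℝ) (S : ℝ → ℝ) : Prop :=
  IsStrategy EV EX ξ ∧
  (∀ v ∈ EV, ∀ x ∈ EX, 0 < ξ v x → ∀ x' ∈ EX, gain EZ ζ S v x' ≤ gain EZ ζ S v x) ∧
  (∀ y : ℝ, 0 < pY EV EX EZ ν ζ ξ y →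
    S y * pY EV EX EZ ν ζ ξ y = pYV EV EX EZ ν ζ ξ y)

/-- In any equilibrium of the discrete single-period Kyle game, the insider's
demand is nondecreasing in the observed true value. -/
theorem insider_demand_monotone
    (EV EX EZ : Finset ℝ) (hEV : EV.Nonempty)
    (ν ζ : ℝ → ℝ)
    (hν : ∀ v ∈ EV, 0 < ν v) (hν1 : ∑ v ∈ EV, ν v = 1)
    (hζ : ∀ z ∈ EZ, 0 < ζ z) (hζ1 : ∑ z ∈ EZ, ζ z = 1)
    (hZm : (-1 : ℝ) ∈ EZ) (hZp : (1 : ℝ) ∈ EZ)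
    (hZsub : ∀ z ∈ EZ, -1 ≤ z ∧ z ≤ 1)
    (hX0 : (0 : ℝ) ∈ EX)
    (ξ : ℝ → ℝ → ℝ) (S : ℝ → ℝ)
    (hSrange : ∀ y, EV.min' hEV ≤ S y ∧ S y ≤ EV.max' hEV)
    (heq : IsKyleEquilibrium EV EX EZ ν ζ ξ S) :
    (∀ vi ∈ EV, ∀ vj ∈ EV, ∀ x ∈ EX, 0 < ξ vi x → vi < vj →
      ∑ x' ∈ EX.filter (fun x' => x ≤ x'), ξ vj x' = 1) ∧
    (∀ vi ∈ EV, ∀ vj ∈ EV, ∀ x ∈ EX, 0 < ξ vi x → vj < vi →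
      ∑ x' ∈ EX.filter (fun x' => x' ≤ x), ξ vj x' = 1) := by
  obtain ⟨hstrat, hopt, _⟩ := heq
  -- key: no support at the "wrong side"
  have key : ∀ vi ∈ EV, ∀ vj ∈ EV, ∀ x ∈ EX, ∀ x' ∈ EX,
      0 < ξ vi x → 0 < ξ vj x' → vi < vj → ¬ (x' < x) := by
    intro vi hvi vj hvj x hx x' hx' hxi hxj hv hlt
    have h1 := hopt vi hvi x hx hxi x' hx'
    have h2 := hopt vj hvj x' hx' hxj x hx
    simp only [gain] at h1 h2
    nlinarith [h1, h2]
  constructor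
  · intro vi hvi vj hvj x hx hxi hv
    have hzero : ∑ x' ∈ EX.filter (fun x' => ¬ x ≤ x'), ξ vj x' = 0 := by
      apply Finset.sum_eq_zero
      intro x' hx'
      rw [Finset.mem_filter] at hx'
      rcases lt_or_eq_of_le ((hstrat vj hvj).1 x' hx'.1) with h | h
      · exact absurd (lt_of_not_ge hx'.2) (key vi hvi vj hvj x hx x' hx'.1 hxi h hv)
      · exact h.symm
    have := Finset.sum_filter_add_sum_filter_not EX (fun x' => x ≤ x') (ξ vj)
    rw [hzero, add_zero] at this
    rw [this, (hstrat vj hvj).2]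
  · intro vi hvi vj hvj x hx hxi hv
    have hzero : ∑ x' ∈ EX.filter (fun x' => ¬ x' ≤ x), ξ vj x' = 0 := by
      apply Finset.sum_eq_zero
      intro x' hx'
      rw [Finset.mem_filter] at hx'
      rcases lt_or_eq_of_le ((hstrat vj hvj).1 x' hx'.1) with h | h
      · exact absurd (lt_of_not_ge hx'.2) (key vj hvj vi hvi x' hx'.1 x hx h hxi hv)
      · exact h.symm
    have := Finset.sum_filter_add_sum_filter_not EX (fun x' => x' ≤ x) (ξ vj)
    rw [hzero, add_zero] at this
    rw [this, (hstrat vj hvj).2]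
end

section
/- In any equilibrium (ξ, S) of the discrete single-period Kyle game, for total demands y₁, y₂ with positive realisation probability and y₂ ≥ y₁ + 2, one has S(y₁) ≤ S(y₂). -/
open Finset

/-- Total mass of types playing order `x`. -/
noncomputable def Amass (EV : Finset ℝ) (ν : ℝ → ℝ) (ξ : ℝ → ℝ → ℝ) (x : ℝ) : ℝ :=
  ∑ v ∈ EV, ν v * ξ v x

/-- Value-weighted mass of types playing order `x`. -/
noncomputable def Bmass (EV : Finset ℝ) (ν : ℝ → ℝ) (ξ : ℝ → ℝ → ℝ) (x : ℝ) : ℝ :=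
  ∑ v ∈ EV, ν v * ξ v x * v

lemma pY_eq_aux (EV EX EZ : Finset ℝ) (ν ζ : ℝ → ℝ) (ξ : ℝ → ℝ → ℝ) (y : ℝ) :
    pY EV EX EZ ν ζ ξ y
      = ∑ x ∈ EX, ∑ z ∈ EZ, if x + z = y then Amass EV ν ξ x * ζ z else 0 := by
  unfold pY
  rw [Finset.sum_comm]
  refine Finset.sum_congr rfl fun x _ => ?_
  rw [Finset.sum_comm]
  refine Finset.sum_congr rfl fun z _ => ?_
  by_cases h : x + z = y
  · simp only [h, if_true, Amass]
    rw [Finset.sum_mul]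
  · simp [h]

lemma pYV_eq_aux (EV EX EZ : Finset ℝ) (ν ζ : ℝ → ℝ) (ξ : ℝ → ℝ → ℝ) (y : ℝ) :
    pYV EV EX EZ ν ζ ξ y
      = ∑ x ∈ EX, ∑ z ∈ EZ, if x + z = y then Bmass EV ν ξ x * ζ z else 0 := by
  unfold pYV
  rw [Finset.sum_comm]
  refine Finset.sum_congr rfl fun x _ => ?_
  rw [Finset.sum_comm]
  refine Finset.sum_congr rfl fun z _ => ?_
  by_cases h : x + z = y
  · simp only [h, if_true, Bmass]
    rw [Finset.sum_mul]
    exact Finset.sum_congr rfl fun v _ => by ring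
  · simp [h]

/-- Strategy monotonicity: larger orders come from weakly larger values. -/
lemma strategy_mono (EV EX EZ : Finset ℝ) (ζ : ℝ → ℝ) (ξ : ℝ → ℝ → ℝ) (S : ℝ → ℝ)
    (hbr : ∀ v ∈ EV, ∀ x ∈ EX, 0 < ξ v x → ∀ x' ∈ EX, gain EZ ζ S v x' ≤ gain EZ ζ S v x)
    {v v' x x' : ℝ} (hv : v ∈ EV) (hv' : v' ∈ EV) (hx : x ∈ EX) (hx' : x' ∈ EX)
    (h1 : 0 < ξ v x) (h2 : 0 < ξ v' x') (hlt : x < x') : v ≤ v' := by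
  have g1 := hbr v hv x hx h1 x' hx'
  have g2 := hbr v' hv' x' hx' h2 x hx
  simp only [gain] at g1 g2
  nlinarith [g1, g2]

/-- In any equilibrium of the discrete single-period Kyle game, prices are
nondecreasing across total demands that differ by at least `2` and have
positive realisation probability. -/
theorem price_monotone_gap_two
    (EV EX EZ : Finset ℝ) (hEV : EV.Nonempty)
    (ν ζ : ℝ → ℝ)
    (hν : ∀ v ∈ EV, 0 < ν v) (hν1 : ∑ v ∈ EV, ν v = 1)
    (hζ : ∀ z ∈ EZ, 0 < ζ z) (hζ1 : ∑ z ∈ EZ, ζ z = 1)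
    (hZm : (-1 : ℝ) ∈ EZ) (hZp : (1 : ℝ) ∈ EZ)
    (hZsub : ∀ z ∈ EZ, -1 ≤ z ∧ z ≤ 1)
    (hX0 : (0 : ℝ) ∈ EX)
    (ξ : ℝ → ℝ → ℝ) (S : ℝ → ℝ)
    (hSrange : ∀ y, EV.min' hEV ≤ S y ∧ S y ≤ EV.max' hEV)
    (heq : IsKyleEquilibrium EV EX EZ ν ζ ξ S) :
    ∀ y1 y2 : ℝ, 0 < pY EV EX EZ ν ζ ξ y1 → 0 < pY EV EX EZ ν ζ ξ y2 →
      y1 + 2 ≤ y2 → S y1 ≤ S y2 := by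
  obtain ⟨hstrat, hbr, hprice⟩ := heq
  have hAB : ∀ x ∈ EX, ∀ x' ∈ EX, x ≤ x' →
      Bmass EV ν ξ x * Amass EV ν ξ x' ≤ Amass EV ν ξ x * Bmass EV ν ξ x' := by
    intro x hx x' hx' hle
    rcases hle.eq_or_lt with rfl | hlt
    · exact (mul_comm (Bmass EV ν ξ x) (Amass EV ν ξ x)).le
    · unfold Amass Bmass
      rw [Finset.sum_mul_sum, Finset.sum_mul_sum]
      refine Finset.sum_le_sum fun v hv => Finset.sum_le_sum fun v' hv' => ?_
      by_cases e1 : ξ v x = 0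
      · simp [e1]
      by_cases e2 : ξ v' x' = 0
      · simp [e2]
      have p1 : 0 < ξ v x := lt_of_le_of_ne ((hstrat v hv).1 x hx) (Ne.symm e1)
      have p2 : 0 < ξ v' x' := lt_of_le_of_ne ((hstrat v' hv').1 x' hx') (Ne.symm e2)
      have hvv : v ≤ v' := strategy_mono EV EX EZ ζ ξ S hbr hv hv' hx hx' p1 p2 hlt
      nlinarith [hvv, mul_nonneg (mul_nonneg (hν v hv).le p1.le)
        (mul_nonneg (hν v' hv').le p2.le)]
  intro y1 y2 hp1 hp2 hgap
  have hS1 := hprice y1 hp1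
  have hS2 := hprice y2 hp2
  have key : pYV EV EX EZ ν ζ ξ y1 * pY EV EX EZ ν ζ ξ y2
      ≤ pY EV EX EZ ν ζ ξ y1 * pYV EV EX EZ ν ζ ξ y2 := by
    rw [pY_eq_aux, pY_eq_aux, pYV_eq_aux, pYV_eq_aux,
      Finset.sum_mul_sum, Finset.sum_mul_sum]
    refine Finset.sum_le_sum fun x hx => Finset.sum_le_sum fun x' hx' => ?_
    rw [Finset.sum_mul_sum, Finset.sum_mul_sum]
    refine Finset.sum_le_sum fun z hz => Finset.sum_le_sum fun z' hz' => ?_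
    by_cases h1 : x + z = y1
    · by_cases h2 : x' + z' = y2
      · simp only [h1, h2, if_true]
        have hxx : x ≤ x' := by
          have hz1 := (hZsub z hz).1
          have hz2 := (hZsub z' hz').2
          linarith
        have habx := hAB x hx x' hx' hxx
        nlinarith [habx, mul_pos (hζ z hz) (hζ z' hz')]
      · simp [h2]
    · simp [h1]
  have e1 : S y1 * (pY EV EX EZ ν ζ ξ y1 * pY EV EX EZ ν ζ ξ y2)
      = pYV EV EX EZ ν ζ ξ y1 * pY EV EX EZ ν ζ ξ y2 := by
    rw [← hS1]; ring
  have e2 : S y2 * (pY EV EX EZ ν ζ ξ y1 * pY EV EX EZ ν ζ ξ y2)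
      = pY EV EX EZ ν ζ ξ y1 * pYV EV EX EZ ν ζ ξ y2 := by
    rw [← hS2]; ring
  have hfin : S y1 * (pY EV EX EZ ν ζ ξ y1 * pY EV EX EZ ν ζ ξ y2)
      ≤ S y2 * (pY EV EX EZ ν ζ ξ y1 * pY EV EX EZ ν ζ ξ y2) := by
    rw [e1, e2]; exact key
  exact le_of_mul_le_mul_right (by simpa [mul_comm] using hfin) (mul_pos hp1 hp2)
end

section
/- In any equilibrium (ξ, S) of the discrete single-period Kyle game, if y₁, y₂ have positive realisation probability, y₂ ≥ y₁, and S(y₁) equals the maximal true value v¹, then S(y₂) = v¹. Symmetrically, if S(y₂) equals the minimal true value vᴺ, then S(y₁) = vᴺ. -/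
open Finset

lemma exists_triple (EV EX EZ : Finset ℝ) (ν ζ : ℝ → ℝ) (ξ : ℝ → ℝ → ℝ) (y : ℝ)
    (h : pY EV EX EZ ν ζ ξ y ≠ 0) :
    ∃ v ∈ EV, ∃ x ∈ EX, ∃ z ∈ EZ, x + z = y ∧ ξ v x ≠ 0 := by
  by_contra hc
  push_neg at hc
  apply h
  unfold pY
  refine Finset.sum_eq_zero fun v hv => Finset.sum_eq_zero fun x hx =>
    Finset.sum_eq_zero fun z hz => ?_
  split_ifs with hxz
  · rw [hc v hv x hx z hz hxz]; ring
  · rfl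

lemma sum_w_max (EV EX EZ : Finset ℝ) (ν ζ : ℝ → ℝ) (ξ : ℝ → ℝ → ℝ) (y M : ℝ) :
    ∑ v ∈ EV, ∑ x ∈ EX, ∑ z ∈ EZ,
      (if x + z = y then ν v * ξ v x * ζ z * (M - v) else 0)
    = M * pY EV EX EZ ν ζ ξ y - pYV EV EX EZ ν ζ ξ y := by
  unfold pY pYV
  rw [Finset.mul_sum, ← Finset.sum_sub_distrib]
  refine Finset.sum_congr rfl fun v _ => ?_
  rw [Finset.mul_sum, ← Finset.sum_sub_distrib]
  refine Finset.sum_congr rfl fun x _ => ?_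
  rw [Finset.mul_sum, ← Finset.sum_sub_distrib]
  refine Finset.sum_congr rfl fun z _ => ?_
  split_ifs <;> ring

lemma sum_w_min (EV EX EZ : Finset ℝ) (ν ζ : ℝ → ℝ) (ξ : ℝ → ℝ → ℝ) (y M : ℝ) :
    ∑ v ∈ EV, ∑ x ∈ EX, ∑ z ∈ EZ,
      (if x + z = y then ν v * ξ v x * ζ z * (v - M) else 0)
    = pYV EV EX EZ ν ζ ξ y - M * pY EV EX EZ ν ζ ξ y := by
  unfold pY pYV
  rw [Finset.mul_sum, ← Finset.sum_sub_distrib]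
  refine Finset.sum_congr rfl fun v _ => ?_
  rw [Finset.mul_sum, ← Finset.sum_sub_distrib]
  refine Finset.sum_congr rfl fun x _ => ?_
  rw [Finset.mul_sum, ← Finset.sum_sub_distrib]
  refine Finset.sum_congr rfl fun z _ => ?_
  split_ifs <;> ring

lemma contrib_zero (EV EX EZ : Finset ℝ) (ν ζ : ℝ → ℝ) (ξ : ℝ → ℝ → ℝ)
    (hν : ∀ v ∈ EV, 0 < ν v) (hζ : ∀ z ∈ EZ, 0 < ζ z)
    (hξ0 : ∀ v ∈ EV, ∀ x ∈ EX, 0 ≤ ξ v x) (y : ℝ) (w : ℝ → ℝ)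
    (hw : ∀ v ∈ EV, 0 ≤ w v)
    (hsum : ∑ v ∈ EV, ∑ x ∈ EX, ∑ z ∈ EZ,
      (if x + z = y then ν v * ξ v x * ζ z * w v else 0) = 0) :
    ∀ v ∈ EV, ∀ x ∈ EX, ∀ z ∈ EZ, x + z = y → ξ v x ≠ 0 → w v = 0 := by
  have hterm : ∀ v ∈ EV, ∀ x ∈ EX, ∀ z ∈ EZ,
      (0:ℝ) ≤ (if x + z = y then ν v * ξ v x * ζ z * w v else 0) := by
    intro v hv x hx z hz
    split_ifs
    · exact mul_nonneg (mul_nonneg (mul_nonneg (hν v hv).le (hξ0 v hv x hx)) (hζ z hz).le)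
        (hw v hv)
    · exact le_refl _
  intro v hv x hx z hz hxz hξ
  have h1 := (Finset.sum_eq_zero_iff_of_nonneg (fun v hv =>
    Finset.sum_nonneg fun x hx => Finset.sum_nonneg fun z hz => hterm v hv x hx z hz)).1
    hsum v hv
  have h2 := (Finset.sum_eq_zero_iff_of_nonneg (fun x hx =>
    Finset.sum_nonneg fun z hz => hterm v hv x hx z hz)).1 h1 x hx
  have h3 := (Finset.sum_eq_zero_iff_of_nonneg (fun z hz => hterm v hv x hx z hz)).1 h2 z hz
  rw [if_pos hxz] at h3
  have hprod : ν v * ξ v x * ζ z ≠ 0 := by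
    have hξp : 0 < ξ v x := lt_of_le_of_ne (hξ0 v hv x hx) (Ne.symm hξ)
    exact ne_of_gt (mul_pos (mul_pos (hν v hv) hξp) (hζ z hz))
  exact (mul_eq_zero.1 h3).resolve_left hprod

lemma order_mono (EZ : Finset ℝ) (ζ : ℝ → ℝ) (S : ℝ → ℝ) (v v' x x' : ℝ)
    (h1 : gain EZ ζ S v x' ≤ gain EZ ζ S v x)
    (h2 : gain EZ ζ S v' x ≤ gain EZ ζ S v' x')
    (hvv : v < v') : x ≤ x' := by
  unfold gain at h1 h2
  nlinarith [h1, h2, hvv]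

/-- In any equilibrium of the discrete single-period Kyle game (under the
grid-compatibility assumption), once the price reaches the maximal true value
it stays there for all larger total demands with positive probability, and
symmetrically for the minimal true value. -/
theorem price_extreme_absorbing
    (EV EX EZ : Finset ℝ) (hEV : EV.Nonempty)
    (ν ζ : ℝ → ℝ)
    (hν : ∀ v ∈ EV, 0 < ν v) (hν1 : ∑ v ∈ EV, ν v = 1)
    (hζ : ∀ z ∈ EZ, 0 < ζ z) (hζ1 : ∑ z ∈ EZ, ζ z = 1)
    (hZm : (-1 : ℝ) ∈ EZ) (hZp : (1 : ℝ) ∈ EZ)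
    (hZsub : ∀ z ∈ EZ, -1 ≤ z ∧ z ≤ 1)
    (hX0 : (0 : ℝ) ∈ EX)
    (hgrid : ∀ x1 ∈ EX, ∀ x2 ∈ EX, ∀ z1 ∈ EZ,
      x1 + z1 - 1 ≤ x2 → x2 ≤ x1 + z1 + 1 → ∃ z2 ∈ EZ, x2 + z2 = x1 + z1)
    (ξ : ℝ → ℝ → ℝ) (S : ℝ → ℝ)
    (hSrange : ∀ y, EV.min' hEV ≤ S y ∧ S y ≤ EV.max' hEV)
    (heq : IsKyleEquilibrium EV EX EZ ν ζ ξ S) :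
    ∀ y1 y2 : ℝ, 0 < pY EV EX EZ ν ζ ξ y1 → 0 < pY EV EX EZ ν ζ ξ y2 → y1 ≤ y2 →
      (S y1 = EV.max' hEV → S y2 = EV.max' hEV) ∧
      (S y2 = EV.min' hEV → S y1 = EV.min' hEV) := by

  intro y1 y2 h1 h2 hle
  obtain ⟨hstrat, hbr, hprice⟩ := heq
  have hξ0 : ∀ v ∈ EV, ∀ x ∈ EX, 0 ≤ ξ v x := fun v hv => (hstrat v hv).1
  constructor
  · intro hS1
    set M := EV.max' hEV with hM
    have hsum0 : ∑ v ∈ EV, ∑ x ∈ EX, ∑ z ∈ EZ,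
        (if x + z = y1 then ν v * ξ v x * ζ z * (M - v) else 0) = 0 := by
      rw [sum_w_max]
      have h := hprice y1 h1
      rw [hS1] at h
      linarith
    have hcon : ∀ v ∈ EV, ∀ x ∈ EX, ∀ z ∈ EZ, x + z = y1 → ξ v x ≠ 0 → M - v = 0 :=
      contrib_zero EV EX EZ ν ζ ξ hν hζ hξ0 y1 (fun v => M - v)
        (fun v hv => sub_nonneg.2 (Finset.le_max' _ _ hv)) hsum0
    have claim : ∀ v ∈ EV, ∀ x ∈ EX, ∀ z ∈ EZ, x + z = y2 → ξ v x ≠ 0 → v = M := by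
      intro v hv x hx z hz hxz hξ
      by_contra hne
      have hvlt : v < M := lt_of_le_of_ne (Finset.le_max' _ _ hv) hne
      obtain ⟨v1, hv1, x1, hx1, z1, hz1, hxz1, hξ1⟩ :=
        exists_triple EV EX EZ ν ζ ξ y1 (ne_of_gt h1)
      have hv1M : v1 = M := by
        have h := hcon v1 hv1 x1 hx1 z1 hz1 hxz1 hξ1
        linarith
      have hξp : 0 < ξ v x := lt_of_le_of_ne (hξ0 v hv x hx) (Ne.symm hξ)
      have hξ1p : 0 < ξ v1 x1 := lt_of_le_of_ne (hξ0 v1 hv1 x1 hx1) (Ne.symm hξ1)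
      have hxle : x ≤ x1 := order_mono EZ ζ S v v1 x x1
        (hbr v hv x hx hξp x1 hx1) (hbr v1 hv1 x1 hx1 hξ1p x hx)
        (by rw [hv1M]; exact hvlt)
      have hzb := hZsub z hz
      have hz1b := hZsub z1 hz1
      obtain ⟨z', hz', hz'eq⟩ := hgrid x1 hx1 x hx z1 hz1 (by linarith) (by linarith)
      have h := hcon v hv x hx z' hz' (by rw [hz'eq, hxz1]) hξ
      exact hne (by linarith)
    have key : pYV EV EX EZ ν ζ ξ y2 = M * pY EV EX EZ ν ζ ξ y2 := by
      unfold pY pYV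
      rw [Finset.mul_sum]
      refine Finset.sum_congr rfl fun v hv => ?_
      rw [Finset.mul_sum]
      refine Finset.sum_congr rfl fun x hx => ?_
      rw [Finset.mul_sum]
      refine Finset.sum_congr rfl fun z hz => ?_
      rw [mul_ite, mul_zero]
      split_ifs with hxz
      · by_cases hξ : ξ v x = 0
        · rw [hξ]; ring
        · rw [claim v hv x hx z hz hxz hξ]; ring
      · rfl
    have hp2 := hprice y2 h2
    rw [key] at hp2
    exact mul_right_cancel₀ (ne_of_gt h2) hp2
  · intro hS2
    set m := EV.min' hEV with hm
    have hsum0 : ∑ v ∈ EV, ∑ x ∈ EX, ∑ z ∈ EZ,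
        (if x + z = y2 then ν v * ξ v x * ζ z * (v - m) else 0) = 0 := by
      rw [sum_w_min]
      have h := hprice y2 h2
      rw [hS2] at h
      linarith
    have hcon : ∀ v ∈ EV, ∀ x ∈ EX, ∀ z ∈ EZ, x + z = y2 → ξ v x ≠ 0 → v - m = 0 :=
      contrib_zero EV EX EZ ν ζ ξ hν hζ hξ0 y2 (fun v => v - m)
        (fun v hv => sub_nonneg.2 (Finset.min'_le _ _ hv)) hsum0
    have claim : ∀ v ∈ EV, ∀ x ∈ EX, ∀ z ∈ EZ, x + z = y1 → ξ v x ≠ 0 → v = m := by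
      intro v hv x hx z hz hxz hξ
      by_contra hne
      have hvgt : m < v := lt_of_le_of_ne (Finset.min'_le _ _ hv) (Ne.symm hne)
      obtain ⟨v2, hv2, x2, hx2, z2, hz2, hxz2, hξ2⟩ :=
        exists_triple EV EX EZ ν ζ ξ y2 (ne_of_gt h2)
      have hv2m : v2 = m := by
        have h := hcon v2 hv2 x2 hx2 z2 hz2 hxz2 hξ2
        linarith
      have hξp : 0 < ξ v x := lt_of_le_of_ne (hξ0 v hv x hx) (Ne.symm hξ)
      have hξ2p : 0 < ξ v2 x2 := lt_of_le_of_ne (hξ0 v2 hv2 x2 hx2) (Ne.symm hξ2)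
      have hxle : x2 ≤ x := order_mono EZ ζ S v2 v x2 x
        (hbr v2 hv2 x2 hx2 hξ2p x hx) (hbr v hv x hx hξp x2 hx2)
        (by rw [hv2m]; exact hvgt)
      have hzb := hZsub z hz
      have hz2b := hZsub z2 hz2
      obtain ⟨z', hz', hz'eq⟩ := hgrid x2 hx2 x hx z2 hz2 (by linarith) (by linarith)
      have h := hcon v hv x hx z' hz' (by rw [hz'eq, hxz2]) hξ
      exact hne (by linarith)
    have key : pYV EV EX EZ ν ζ ξ y1 = m * pY EV EX EZ ν ζ ξ y1 := by
      unfold pY pYV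
      rw [Finset.mul_sum]
      refine Finset.sum_congr rfl fun v hv => ?_
      rw [Finset.mul_sum]
      refine Finset.sum_congr rfl fun x hx => ?_
      rw [Finset.mul_sum]
      refine Finset.sum_congr rfl fun z hz => ?_
      rw [mul_ite, mul_zero]
      split_ifs with hxz
      · by_cases hξ : ξ v x = 0
        · rw [hξ]; ring
        · rw [claim v hv x hx z hz hxz hξ]; ring
      · rfl
    have hp1 := hprice y1 h1
    rw [key] at hp1
    exact mul_right_cancel₀ (ne_of_gt h1) hp1
end

section
/- In any equilibrium (ξ, S) of a discrete single-period Kyle game, either all insider buy orders execute at the maximal true value (S(x+z) = v¹ for all x ∈ E_X ∩ (0,∞), z ∈ E_Z), or the sizes of insider buy orders used with positive probability are bounded by 6 + 6/ζ({1}). -/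
open Finset

/-- Auxiliary signed sum used to compare the price `S y` with a constant `c`. -/
noncomputable def phiSum (EV EX EZ : Finset ℝ) (ν ζ : ℝ → ℝ) (ξ : ℝ → ℝ → ℝ) (y c : ℝ) : ℝ :=
  ∑ v ∈ EV, ∑ x ∈ EX, ∑ z ∈ EZ, if x + z = y then ν v * ξ v x * ζ z * (v - c) else 0

lemma phiSum_eq (EV EX EZ : Finset ℝ) (ν ζ : ℝ → ℝ) (ξ : ℝ → ℝ → ℝ) (y c : ℝ) :
    phiSum EV EX EZ ν ζ ξ y c
      = pYV EV EX EZ ν ζ ξ y - c * pY EV EX EZ ν ζ ξ y := by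
  unfold phiSum pYV pY
  rw [Finset.mul_sum, ← Finset.sum_sub_distrib]
  refine Finset.sum_congr rfl fun v _ => ?_
  rw [Finset.mul_sum, ← Finset.sum_sub_distrib]
  refine Finset.sum_congr rfl fun x _ => ?_
  rw [Finset.mul_sum, ← Finset.sum_sub_distrib]
  refine Finset.sum_congr rfl fun z _ => ?_
  split_ifs with h
  · ring
  · ring

section signs

variable {EV EX EZ : Finset ℝ} {ν ζ : ℝ → ℝ} {ξ : ℝ → ℝ → ℝ}

/-- each term of `phiSum` is nonneg provided all contributors' values are `≥ c`. -/
lemma phiTerm_nonneg (hν : ∀ v ∈ EV, 0 < ν v) (hζ : ∀ z ∈ EZ, 0 < ζ z)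
    (hξnn : ∀ v ∈ EV, ∀ x ∈ EX, 0 ≤ ξ v x) {y c : ℝ}
    (hlb : ∀ v ∈ EV, ∀ x ∈ EX, ∀ z ∈ EZ, x + z = y → 0 < ξ v x → c ≤ v)
    {v : ℝ} (hv : v ∈ EV) {x : ℝ} (hx : x ∈ EX) {z : ℝ} (hz : z ∈ EZ) :
    0 ≤ if x + z = y then ν v * ξ v x * ζ z * (v - c) else 0 := by
  split_ifs with h
  · rcases (hξnn v hv x hx).lt_or_eq with hp | hp0
    · have hvc := hlb v hv x hx z hz h hp
      have h1 : 0 ≤ ν v * ξ v x * ζ z :=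
        le_of_lt (mul_pos (mul_pos (hν v hv) hp) (hζ z hz))
      exact mul_nonneg h1 (sub_nonneg.2 hvc)
    · simp [← hp0]
  · exact le_refl 0

lemma phiSum_nonneg (hν : ∀ v ∈ EV, 0 < ν v) (hζ : ∀ z ∈ EZ, 0 < ζ z)
    (hξnn : ∀ v ∈ EV, ∀ x ∈ EX, 0 ≤ ξ v x) {y c : ℝ}
    (hlb : ∀ v ∈ EV, ∀ x ∈ EX, ∀ z ∈ EZ, x + z = y → 0 < ξ v x → c ≤ v) :
    0 ≤ phiSum EV EX EZ ν ζ ξ y c :=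
  Finset.sum_nonneg fun v hv => Finset.sum_nonneg fun x hx =>
    Finset.sum_nonneg fun z hz => phiTerm_nonneg hν hζ hξnn hlb hv hx hz

lemma phiSum_nonpos (hν : ∀ v ∈ EV, 0 < ν v) (hζ : ∀ z ∈ EZ, 0 < ζ z)
    (hξnn : ∀ v ∈ EV, ∀ x ∈ EX, 0 ≤ ξ v x) {y c : ℝ}
    (hub : ∀ v ∈ EV, ∀ x ∈ EX, ∀ z ∈ EZ, x + z = y → 0 < ξ v x → v ≤ c) :
    phiSum EV EX EZ ν ζ ξ y c ≤ 0 := by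
  refine Finset.sum_nonpos fun v hv => Finset.sum_nonpos fun x hx =>
    Finset.sum_nonpos fun z hz => ?_
  split_ifs with h
  · rcases (hξnn v hv x hx).lt_or_eq with hp | hp0
    · have hvc := hub v hv x hx z hz h hp
      have h1 : 0 ≤ ν v * ξ v x * ζ z :=
        le_of_lt (mul_pos (mul_pos (hν v hv) hp) (hζ z hz))
      exact mul_nonpos_of_nonneg_of_nonpos h1 (sub_nonpos.2 hvc)
    · simp [← hp0]
  · exact le_refl 0

/-- if all contributors are `≥ c` and one contributor has value `> c`, the sum is positive. -/
lemma phiSum_pos (hν : ∀ v ∈ EV, 0 < ν v) (hζ : ∀ z ∈ EZ, 0 < ζ z)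
    (hξnn : ∀ v ∈ EV, ∀ x ∈ EX, 0 ≤ ξ v x) {y c : ℝ}
    (hlb : ∀ v ∈ EV, ∀ x ∈ EX, ∀ z ∈ EZ, x + z = y → 0 < ξ v x → c ≤ v)
    {v₀ x₀ z₀ : ℝ} (hv₀ : v₀ ∈ EV) (hx₀ : x₀ ∈ EX) (hz₀ : z₀ ∈ EZ)
    (hy₀ : x₀ + z₀ = y) (hξ₀ : 0 < ξ v₀ x₀) (hvc : c < v₀) :
    0 < phiSum EV EX EZ ν ζ ξ y c := by
  have hterm : 0 < (if x₀ + z₀ = y then ν v₀ * ξ v₀ x₀ * ζ z₀ * (v₀ - c) else 0) := by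
    rw [if_pos hy₀]
    exact mul_pos (mul_pos (mul_pos (hν v₀ hv₀) hξ₀) (hζ z₀ hz₀)) (sub_pos.2 hvc)
  have h1 : (if x₀ + z₀ = y then ν v₀ * ξ v₀ x₀ * ζ z₀ * (v₀ - c) else 0)
      ≤ ∑ z ∈ EZ, if x₀ + z = y then ν v₀ * ξ v₀ x₀ * ζ z * (v₀ - c) else 0 :=
    Finset.single_le_sum (fun z hz => phiTerm_nonneg hν hζ hξnn hlb hv₀ hx₀ hz) hz₀
  have h2 : (∑ z ∈ EZ, if x₀ + z = y then ν v₀ * ξ v₀ x₀ * ζ z * (v₀ - c) else 0)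
      ≤ ∑ x ∈ EX, ∑ z ∈ EZ, if x + z = y then ν v₀ * ξ v₀ x * ζ z * (v₀ - c) else 0 :=
    Finset.single_le_sum (f := fun x => ∑ z ∈ EZ, if x + z = y then ν v₀ * ξ v₀ x * ζ z * (v₀ - c) else 0)
      (fun x hx => Finset.sum_nonneg fun z hz => phiTerm_nonneg hν hζ hξnn hlb hv₀ hx hz) hx₀
  have h3 : (∑ x ∈ EX, ∑ z ∈ EZ, if x + z = y then ν v₀ * ξ v₀ x * ζ z * (v₀ - c) else 0)
      ≤ phiSum EV EX EZ ν ζ ξ y c :=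
    Finset.single_le_sum (f := fun v => ∑ x ∈ EX, ∑ z ∈ EZ, if x + z = y then ν v * ξ v x * ζ z * (v - c) else 0)
      (fun v hv => Finset.sum_nonneg fun x hx => Finset.sum_nonneg fun z hz =>
        phiTerm_nonneg hν hζ hξnn hlb hv hx hz) hv₀
  calc (0:ℝ) < _ := hterm
    _ ≤ _ := h1.trans (h2.trans h3)

/-- each term of `pY` is nonnegative. -/
lemma pYTerm_nonneg (hν : ∀ v ∈ EV, 0 < ν v) (hζ : ∀ z ∈ EZ, 0 < ζ z)
    (hξnn : ∀ v ∈ EV, ∀ x ∈ EX, 0 ≤ ξ v x) {y : ℝ}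
    {v : ℝ} (hv : v ∈ EV) {x : ℝ} (hx : x ∈ EX) {z : ℝ} (hz : z ∈ EZ) :
    0 ≤ if x + z = y then ν v * ξ v x * ζ z else 0 := by
  split_ifs with h
  · exact mul_nonneg (mul_nonneg (le_of_lt (hν v hv)) (hξnn v hv x hx)) (le_of_lt (hζ z hz))
  · exact le_refl 0

/-- positivity of `pY` at demands generated by a used order. -/
lemma pY_pos (hν : ∀ v ∈ EV, 0 < ν v) (hζ : ∀ z ∈ EZ, 0 < ζ z)
    (hξnn : ∀ v ∈ EV, ∀ x ∈ EX, 0 ≤ ξ v x)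
    {v x z : ℝ} (hv : v ∈ EV) (hx : x ∈ EX) (hz : z ∈ EZ) (hξp : 0 < ξ v x) :
    0 < pY EV EX EZ ν ζ ξ (x + z) := by
  set y := x + z with hy
  have hterm : 0 < (if x + z = y then ν v * ξ v x * ζ z else 0) := by
    rw [if_pos hy.symm.symm]
    exact mul_pos (mul_pos (hν v hv) hξp) (hζ z hz)
  have h1 : (if x + z = y then ν v * ξ v x * ζ z else 0)
      ≤ ∑ z' ∈ EZ, if x + z' = y then ν v * ξ v x * ζ z' else 0 :=
    Finset.single_le_sum (fun z' hz' => pYTerm_nonneg hν hζ hξnn hv hx hz') hz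
  have h2 : (∑ z' ∈ EZ, if x + z' = y then ν v * ξ v x * ζ z' else 0)
      ≤ ∑ x' ∈ EX, ∑ z' ∈ EZ, if x' + z' = y then ν v * ξ v x' * ζ z' else 0 :=
    Finset.single_le_sum (f := fun x' => ∑ z' ∈ EZ, if x' + z' = y then ν v * ξ v x' * ζ z' else 0)
      (fun x' hx' => Finset.sum_nonneg fun z' hz' => pYTerm_nonneg hν hζ hξnn hv hx' hz') hx
  have h3 : (∑ x' ∈ EX, ∑ z' ∈ EZ, if x' + z' = y then ν v * ξ v x' * ζ z' else 0)
      ≤ pY EV EX EZ ν ζ ξ y :=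
    Finset.single_le_sum (f := fun v' => ∑ x' ∈ EX, ∑ z' ∈ EZ, if x' + z' = y then ν v' * ξ v' x' * ζ z' else 0)
      (fun v' hv' => Finset.sum_nonneg fun x' hx' => Finset.sum_nonneg fun z' hz' =>
        pYTerm_nonneg hν hζ hξnn hv' hx' hz') hv
  calc (0:ℝ) < _ := hterm
    _ ≤ _ := h1.trans (h2.trans h3)

/-- from `pY y > 0` extract a contributor. -/
lemma pY_elim (hξnn : ∀ v ∈ EV, ∀ x ∈ EX, 0 ≤ ξ v x) {y : ℝ}
    (hpy : 0 < pY EV EX EZ ν ζ ξ y) :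
    ∃ v ∈ EV, ∃ x ∈ EX, ∃ z ∈ EZ, x + z = y ∧ 0 < ξ v x := by
  by_contra hcon
  push_neg at hcon
  have h0 : pY EV EX EZ ν ζ ξ y = 0 := by
    refine Finset.sum_eq_zero fun v hv => Finset.sum_eq_zero fun x hx =>
      Finset.sum_eq_zero fun z hz => ?_
    split_ifs with h
    · have h1 : ξ v x ≤ 0 := hcon v hv x hx z hz h
      have h2 : ξ v x = 0 := le_antisymm h1 (hξnn v hv x hx)
      rw [h2]; ring
    · rfl
  rw [h0] at hpy
  exact lt_irrefl 0 hpy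

end signs


/-- In any equilibrium of the discrete single-period Kyle game, either the
insider's buy orders always execute at the maximal true value, or all buy
orders used with positive probability have size at most `6 + 6/ζ({1})`. -/
theorem insider_buy_orders_bounded
    (EV EX EZ : Finset ℝ) (hEV : EV.Nonempty)
    (ν ζ : ℝ → ℝ)
    (hν : ∀ v ∈ EV, 0 < ν v) (hν1 : ∑ v ∈ EV, ν v = 1)
    (hζ : ∀ z ∈ EZ, 0 < ζ z) (hζ1 : ∑ z ∈ EZ, ζ z = 1)
    (hZm : (-1 : ℝ) ∈ EZ) (hZp : (1 : ℝ) ∈ EZ)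
    (hZsub : ∀ z ∈ EZ, -1 ≤ z ∧ z ≤ 1)
    (hX0 : (0 : ℝ) ∈ EX)
    (hgrid : ∀ x1 ∈ EX, ∀ x2 ∈ EX, ∀ z1 ∈ EZ,
      x1 + z1 - 1 ≤ x2 → x2 ≤ x1 + z1 + 1 → ∃ z2 ∈ EZ, x2 + z2 = x1 + z1)
    (ξ : ℝ → ℝ → ℝ) (S : ℝ → ℝ)
    (hSrange : ∀ y, EV.min' hEV ≤ S y ∧ S y ≤ EV.max' hEV)
    (heq : IsKyleEquilibrium EV EX EZ ν ζ ξ S) :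
    (∀ x ∈ EX, 0 < x → ∀ z ∈ EZ, S (x + z) = EV.max' hEV) ∨
    (∀ x ∈ EX, (∃ v ∈ EV, 0 < ξ v x) → 0 < x → x ≤ 6 + 6 / ζ 1) := by
  obtain ⟨hstrat, hopt, hprice⟩ := heq
  by_cases hD2 : ∀ x ∈ EX, (∃ v ∈ EV, 0 < ξ v x) → 0 < x → x ≤ 6 + 6 / ζ 1
  · exact Or.inr hD2
  left
  push_neg at hD2
  obtain ⟨xs, hxsEX, hxsused, hxspos, hxsbig⟩ := hD2
  -- basic facts
  set M := EV.max' hEV with hMdef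
  have hMmem : M ∈ EV := EV.max'_mem hEV
  have hvleM : ∀ v ∈ EV, v ≤ M := fun v hv => EV.le_max' v hv
  have hξnn : ∀ v ∈ EV, ∀ x ∈ EX, 0 ≤ ξ v x := fun v hv => (hstrat v hv).1
  have hζ1pos : 0 < ζ 1 := hζ 1 hZp
  have hζ1le : ζ 1 ≤ 1 := by
    have h := Finset.single_le_sum (f := ζ) (fun z hz => le_of_lt (hζ z hz)) hZp
    linarith [hζ1]
  have h12 : (12:ℝ) ≤ 6 + 6 / ζ 1 := by
    have h6 : (6:ℝ) ≤ 6 / ζ 1 := by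
      rw [le_div_iff₀ hζ1pos]; nlinarith
    linarith
  have hSleM : ∀ y, S y ≤ M := fun y => (hSrange y).2
  -- the maximal used order
  set UO := EX.filter (fun x => ∃ v ∈ EV, 0 < ξ v x) with hUO
  have hUOne : UO.Nonempty := ⟨xs, Finset.mem_filter.2 ⟨hxsEX, hxsused⟩⟩
  set xb := UO.max' hUOne with hxbdef
  have hxbmem := UO.max'_mem hUOne
  have hxbEX : xb ∈ EX := (Finset.mem_filter.1 hxbmem).1
  obtain ⟨v0, hv0EV, hv0ξ⟩ : ∃ v ∈ EV, 0 < ξ v xb := (Finset.mem_filter.1 hxbmem).2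
  have hmaxuse : ∀ v ∈ EV, ∀ x ∈ EX, 0 < ξ v x → x ≤ xb :=
    fun v hv x hx hp => UO.le_max' x (Finset.mem_filter.2 ⟨hx, v, hv, hp⟩)
  have hxbge : xs ≤ xb := UO.le_max' xs (Finset.mem_filter.2 ⟨hxsEX, hxsused⟩)
  have hxb12 : (12:ℝ) ≤ xb := by linarith
  -- optimality in expanded form
  have hopt' : ∀ v ∈ EV, ∀ x ∈ EX, 0 < ξ v x → ∀ x' ∈ EX,
      x' * (v - avgPrice EZ ζ S x') ≤ x * (v - avgPrice EZ ζ S x) := by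
    intro v hv x hx hp x' hx'
    have h := hopt v hv x hx hp x' hx'
    simpa [gain] using h
  have gain0 : ∀ v ∈ EV, ∀ x ∈ EX, 0 < ξ v x → 0 < x → avgPrice EZ ζ S x ≤ v := by
    intro v hv x hx hp hxpos
    have h := hopt' v hv x hx hp 0 hX0
    nlinarith
  -- monotonicity of used orders in values
  have mono : ∀ v ∈ EV, ∀ x ∈ EX, 0 < ξ v x → ∀ v' ∈ EV, ∀ x' ∈ EX, 0 < ξ v' x' →
      v < v' → x ≤ x' := by
    intro v hv x hx hp v' hv' x' hx' hp' hvv'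
    by_contra hgt
    push_neg at hgt
    have h1 := hopt' v hv x hx hp x' hx'
    have h2 := hopt' v' hv' x' hx' hp' x hx
    nlinarith
  -- M uses the maximal used order
  have hMxb : 0 < ξ M xb := by
    rcases eq_or_lt_of_le (hvleM v0 hv0EV) with heqv | hlt
    · rwa [← heqv]
    · obtain ⟨xM, hxM, hxMp⟩ : ∃ x ∈ EX, 0 < ξ M x := by
        by_contra hc; push_neg at hc
        have h0 : ∑ x ∈ EX, ξ M x = 0 :=
          Finset.sum_eq_zero fun x hx => le_antisymm (hc x hx) (hξnn M hMmem x hx)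
        rw [(hstrat M hMmem).2] at h0; norm_num at h0
      have h1 : xb ≤ xM := mono v0 hv0EV xb hxbEX hv0ξ M hMmem xM hxM hxMp hlt
      have h2 : xM ≤ xb := hmaxuse M hMmem xM hxM hxMp
      rwa [le_antisymm h1 h2]
  -- phiSum and price
  have hphiS : ∀ y c, 0 < pY EV EX EZ ν ζ ξ y →
      phiSum EV EX EZ ν ζ ξ y c = (S y - c) * pY EV EX EZ ν ζ ξ y := by
    intro y c hy
    rw [phiSum_eq, ← hprice y hy]; ring
  have priceLE : ∀ y c, 0 < pY EV EX EZ ν ζ ξ y →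
      (∀ v ∈ EV, ∀ x ∈ EX, ∀ z ∈ EZ, x + z = y → 0 < ξ v x → v ≤ c) → S y ≤ c := by
    intro y c hy hub
    have h := phiSum_nonpos hν hζ hξnn hub
    rw [hphiS y c hy] at h
    nlinarith
  have priceGE : ∀ y c, 0 < pY EV EX EZ ν ζ ξ y →
      (∀ v ∈ EV, ∀ x ∈ EX, ∀ z ∈ EZ, x + z = y → 0 < ξ v x → c ≤ v) → c ≤ S y := by
    intro y c hy hlb
    have h := phiSum_nonneg hν hζ hξnn hlb
    rw [hphiS y c hy] at h
    nlinarith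
  have contribLE : ∀ y, 0 < pY EV EX EZ ν ζ ξ y →
      ∃ v ∈ EV, ∃ x ∈ EX, ∃ z ∈ EZ, x + z = y ∧ 0 < ξ v x ∧ v ≤ S y := by
    intro y hy
    by_contra hc; push_neg at hc
    obtain ⟨v₀, hv₀, x₀, hx₀, z₀, hz₀, hyy, hp⟩ := pY_elim hξnn hy
    have h := phiSum_pos hν hζ hξnn
      (fun v hv x hx z hz hxy hp' => le_of_lt (hc v hv x hx z hz hxy hp'))
      hv₀ hx₀ hz₀ hyy hp (hc v₀ hv₀ x₀ hx₀ z₀ hz₀ hyy hp)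
    rw [hphiS y (S y) hy] at h
    simp at h
  have contribLT : ∀ y w, 0 < pY EV EX EZ ν ζ ξ y → S y = w →
      ∀ vh ∈ EV, ∀ xh ∈ EX, ∀ zh ∈ EZ, xh + zh = y → 0 < ξ vh xh → w < vh →
      ∃ v ∈ EV, ∃ x ∈ EX, ∃ z ∈ EZ, x + z = y ∧ 0 < ξ v x ∧ v < w := by
    intro y w hpy hSy vh hvh xh hxh zh hzh hyz hξh hwlt
    by_contra hc; push_neg at hc
    have h := phiSum_pos hν hζ hξnn hc hvh hxh hzh hyz hξh hwlt
    rw [hphiS y w hpy, hSy] at h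
    simp at h
  -- average price bounds
  have A_le : ∀ (x c : ℝ), (∀ z ∈ EZ, S (x + z) ≤ c) → avgPrice EZ ζ S x ≤ c := by
    intro x c h
    have h1 : avgPrice EZ ζ S x ≤ ∑ z ∈ EZ, ζ z * c :=
      Finset.sum_le_sum fun z hz => mul_le_mul_of_nonneg_left (h z hz) (le_of_lt (hζ z hz))
    rwa [← Finset.sum_mul, hζ1, one_mul] at h1
  have A_ge : ∀ (x c : ℝ), (∀ z ∈ EZ, c ≤ S (x + z)) → c ≤ avgPrice EZ ζ S x := by
    intro x c h
    have h1 : (∑ z ∈ EZ, ζ z * c) ≤ avgPrice EZ ζ S x :=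
      Finset.sum_le_sum fun z hz => mul_le_mul_of_nonneg_left (h z hz) (le_of_lt (hζ z hz))
    rwa [← Finset.sum_mul, hζ1, one_mul] at h1
  -- if the average equals an upper bound, all prices in the window equal it
  have avg_forces_ub : ∀ (x c : ℝ), (∀ z ∈ EZ, S (x + z) ≤ c) → avgPrice EZ ζ S x = c →
      ∀ z ∈ EZ, S (x + z) = c := by
    intro x c hub heqc z hz
    have hsum : ∑ z ∈ EZ, ζ z * (c - S (x + z)) = 0 := by
      simp only [mul_sub]
      rw [Finset.sum_sub_distrib, ← Finset.sum_mul, hζ1, one_mul]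
      unfold avgPrice at heqc
      rw [heqc]; ring
    have hnn : ∀ z ∈ EZ, 0 ≤ ζ z * (c - S (x + z)) :=
      fun z hz => mul_nonneg (le_of_lt (hζ z hz)) (sub_nonneg.2 (hub z hz))
    have h0 := (Finset.sum_eq_zero_iff_of_nonneg hnn).1 hsum z hz
    rcases mul_eq_zero.1 h0 with h | h
    · exact absurd h (ne_of_gt (hζ z hz))
    · linarith
  have avg_forces_lb : ∀ (x c : ℝ), (∀ z ∈ EZ, c ≤ S (x + z)) → avgPrice EZ ζ S x = c →
      ∀ z ∈ EZ, S (x + z) = c := by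
    intro x c hlb heqc z hz
    have hsum : ∑ z ∈ EZ, ζ z * (S (x + z) - c) = 0 := by
      simp only [mul_sub]
      rw [Finset.sum_sub_distrib, ← Finset.sum_mul, hζ1, one_mul]
      unfold avgPrice at heqc
      rw [heqc]; ring
    have hnn : ∀ z ∈ EZ, 0 ≤ ζ z * (S (x + z) - c) :=
      fun z hz => mul_nonneg (le_of_lt (hζ z hz)) (sub_nonneg.2 (hlb z hz))
    have h0 := (Finset.sum_eq_zero_iff_of_nonneg hnn).1 hsum z hz
    rcases mul_eq_zero.1 h0 with h | h
    · exact absurd h (ne_of_gt (hζ z hz))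
    · linarith
  -- minimal user of the top order
  set U := EV.filter (fun v => 0 < ξ v xb) with hUdef
  have hUne : U.Nonempty := ⟨M, Finset.mem_filter.2 ⟨hMmem, hMxb⟩⟩
  set u0 := U.min' hUne with hu0def
  have hu0mem := U.min'_mem hUne
  have hu0EV : u0 ∈ EV := (Finset.mem_filter.1 hu0mem).1
  have hu0ξ : 0 < ξ u0 xb := (Finset.mem_filter.1 hu0mem).2
  have hu0le : ∀ v ∈ EV, 0 < ξ v xb → u0 ≤ v :=
    fun v hv hp => U.min'_le v (Finset.mem_filter.2 ⟨hv, hp⟩)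
  have hu0M : u0 ≤ M := hu0le M hMmem hMxb
  -- contributors to demand xb + 1
  have hcontrib1 : ∀ v ∈ EV, ∀ x ∈ EX, ∀ z ∈ EZ, x + z = xb + 1 → 0 < ξ v x → u0 ≤ v := by
    intro v hv x hx z hz hxz hp
    have hx_le : x ≤ xb := hmaxuse v hv x hx hp
    have hz_le : z ≤ 1 := (hZsub z hz).2
    have hx_eq : x = xb := by linarith
    exact hu0le v hv (hx_eq ▸ hp)
  have hpy1 : 0 < pY EV EX EZ ν ζ ξ (xb + 1) := pY_pos hν hζ hξnn hMmem hxbEX hZp hMxb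
  have hS1ge : u0 ≤ S (xb + 1) := priceGE _ _ hpy1 hcontrib1
  -- τ : the largest deficit (relative to u0) at noise values other than 1
  have hEZ1ne : (EZ.erase 1).Nonempty := ⟨-1, Finset.mem_erase.2 ⟨by norm_num, hZm⟩⟩
  set τ := (EZ.erase 1).sup' hEZ1ne (fun z => u0 - S (xb + z)) with hτdef
  obtain ⟨zs, hzsmem, hzseq⟩ : ∃ z ∈ EZ.erase 1, (EZ.erase 1).sup' hEZ1ne (fun z => u0 - S (xb + z)) = u0 - S (xb + z) :=
    Finset.exists_mem_eq_sup' hEZ1ne _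
  have hτge : ∀ z ∈ EZ.erase 1, u0 - S (xb + z) ≤ τ :=
    fun z hz => Finset.le_sup' (fun z => u0 - S (xb + z)) hz
  rcases le_or_gt τ 0 with hτle | hτpos
  · -- CASE A : no deficit, all prices at the top window equal u0, so u0 = M and
    -- the market maker's quotes at all buy orders equal M.
    have hSz : ∀ z ∈ EZ, u0 ≤ S (xb + z) := by
      intro z hz
      by_cases h1 : z = 1
      · rw [h1]; exact hS1ge
      · have := hτge z (Finset.mem_erase.2 ⟨h1, hz⟩)
        have hτ' : u0 - S (xb + z) ≤ 0 := le_trans this hτle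
        linarith
    have hAu : avgPrice EZ ζ S xb ≤ u0 := gain0 u0 hu0EV xb hxbEX hu0ξ (by linarith)
    have hAge' : u0 ≤ avgPrice EZ ζ S xb := A_ge xb u0 hSz
    have hAeq : avgPrice EZ ζ S xb = u0 := le_antisymm hAu hAge'
    have hSeq : ∀ z ∈ EZ, S (xb + z) = u0 := avg_forces_lb xb u0 hSz hAeq
    have hu0eqM : u0 = M := by
      by_contra hne
      have hlt : u0 < M := lt_of_le_of_ne hu0M hne
      have h := phiSum_pos hν hζ hξnn hcontrib1 hMmem hxbEX hZp rfl hMxb hlt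
      rw [hphiS _ _ hpy1, hSeq 1 hZp] at h
      simp at h
    -- conclude statement (1)
    intro x hx hxpos z hz
    have hAxbM : avgPrice EZ ζ S xb = M := by rw [hAeq, hu0eqM]
    have hdev := hopt' M hMmem xb hxbEX hMxb x hx
    rw [hAxbM] at hdev
    have hAxge : M ≤ avgPrice EZ ζ S x := by nlinarith
    have hAxle : avgPrice EZ ζ S x ≤ M := A_le x M (fun z' _ => hSleM _)
    exact avg_forces_ub x M (fun z' _ => hSleM _) (le_antisymm hAxle hAxge) z hz
  · -- CASE B : positive deficit; derive a contradiction with the size of xb.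
    exfalso
    have hzsEZ : zs ∈ EZ := (Finset.mem_erase.1 hzsmem).2
    have hzsne : zs ≠ 1 := (Finset.mem_erase.1 hzsmem).1
    have hzsm1 : -1 ≤ zs := (hZsub zs hzsEZ).1
    have hτval : τ = u0 - S (xb + zs) := by rw [hτdef]; exact hzseq
    have hpys : 0 < pY EV EX EZ ν ζ ξ (xb + zs) := pY_pos hν hζ hξnn hMmem hxbEX hzsEZ hMxb
    obtain ⟨v1, hv1EV, p1, hp1EX, z1, hz1EZ, hyz1, hp1ξ, hv1le⟩ := contribLE (xb + zs) hpys
    have hv1u : v1 ≤ u0 - τ := by rw [hτval] at *; linarith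
    have hv1ltM : v1 < M := by linarith
    have hp1ge : xb - 2 ≤ p1 := by
      have h1 : z1 ≤ 1 := (hZsub z1 hz1EZ).2
      linarith
    have hp1le : p1 ≤ xb := hmaxuse v1 hv1EV p1 hp1EX hp1ξ
    -- the ladder of used orders descending from the top
    have ladder : ∀ n : ℕ, ∀ w, w ∈ EV → ∀ p, p ∈ EX → 0 < ξ w p →
        ∀ wh, wh ∈ EV → ∀ ph, ph ∈ EX → 0 < ξ wh ph → w < wh → p ≤ ph → ph ≤ p + 2 →
        (EV.filter (fun v => v < w)).card ≤ n →
        ∀ t, 0 < t → t ≤ p → ∃ q, q ∈ EX ∧ (∃ vq ∈ EV, 0 < ξ vq q) ∧ t ≤ q ∧ q < t + 2 := by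
      intro n
      induction n using Nat.strong_induction_on with
      | _ n ih =>
        intro w hw p hp hξw wh hwh ph hph hξwh hwwh hpph hph2 hcard t ht htp
        by_cases hdone : p < t + 2
        · exact ⟨p, hp, ⟨w, hw, hξw⟩, htp, hdone⟩
        push_neg at hdone
        have hppos : 0 < p := by linarith
        have hAw : avgPrice EZ ζ S p ≤ w := gain0 w hw p hp hξw hppos
        have hnext : ∃ w', w' ∈ EV ∧ ∃ p', p' ∈ EX ∧ 0 < ξ w' p' ∧ w' < w ∧ t ≤ p' ∧
            ∃ wh', wh' ∈ EV ∧ ∃ ph', ph' ∈ EX ∧ 0 < ξ wh' ph' ∧ w' < wh' ∧ p' ≤ ph' ∧ ph' ≤ p' + 2 := by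
          by_cases hdef : ∃ z ∈ EZ, S (p + z) < w
          · obtain ⟨z, hzEZ, hzlt⟩ := hdef
            have hpy : 0 < pY EV EX EZ ν ζ ξ (p + z) := pY_pos hν hζ hξnn hw hp hzEZ hξw
            obtain ⟨w', hw', p', hp', z', hz', hsum, hξ', hle'⟩ := contribLE (p + z) hpy
            have hw'w : w' < w := lt_of_le_of_lt hle' hzlt
            have hp'le : p' ≤ p := mono w' hw' p' hp' hξ' w hw p hp hξw hw'w
            have hp'ge : p - 2 ≤ p' := by
              have h1 : -1 ≤ z := (hZsub z hzEZ).1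
              have h2 : z' ≤ 1 := (hZsub z' hz').2
              linarith
            exact ⟨w', hw', p', hp', hξ', hw'w, by linarith,
              w, hw, p, hp, hξw, hw'w, hp'le, by linarith⟩
          · push_neg at hdef
            have hSeqw : ∀ z ∈ EZ, S (p + z) = w :=
              avg_forces_lb p w hdef (le_antisymm hAw (A_ge p w hdef))
            obtain ⟨z2, hz2EZ, hz2⟩ := hgrid p hp ph hph 1 hZp (by linarith) (by linarith)
            have hpyp1 : 0 < pY EV EX EZ ν ζ ξ (p + 1) := pY_pos hν hζ hξnn hw hp hZp hξw
            obtain ⟨w', hw', p', hp', z', hz', hsum, hξ', hlt'⟩ :=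
              contribLT (p + 1) w hpyp1 (hSeqw 1 hZp) wh hwh ph hph z2 hz2EZ hz2 hξwh hwwh
            have hp'lep : p' ≤ p := mono w' hw' p' hp' hξ' w hw p hp hξw hlt'
            have hp'gep : p ≤ p' := by
              have h2 : z' ≤ 1 := (hZsub z' hz').2
              linarith
            exact ⟨w', hw', p', hp', hξ', hlt', by linarith,
              wh, hwh, ph, hph, hξwh, lt_trans hlt' hwwh, by linarith, by linarith⟩
        obtain ⟨w', hw', p', hp', hξ', hw'w, htp', wh', hwh', ph', hph', hξwh', hw'wh', hpph', hph2'⟩ := hnext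
        have hsubset : EV.filter (fun v => v < w') ⊆ EV.filter (fun v => v < w) := by
          intro a ha
          rw [Finset.mem_filter] at ha ⊢
          exact ⟨ha.1, lt_trans ha.2 hw'w⟩
        have hss : EV.filter (fun v => v < w') ⊂ EV.filter (fun v => v < w) := by
          rw [Finset.ssubset_iff_of_subset hsubset]
          exact ⟨w', Finset.mem_filter.2 ⟨hw', hw'w⟩, by simp⟩
        have hcard' : (EV.filter (fun v => v < w')).card < n :=
          lt_of_lt_of_le (Finset.card_lt_card hss) hcard
        exact ih _ hcard' w' hw' p' hp' hξ' wh' hwh' ph' hph' hξwh' hw'wh' hpph' hph2'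
          (le_refl _) t ht htp'
    obtain ⟨qt, hqtEX, ⟨wq, hwqEV, hwqξ⟩, hqtge, hqtlt⟩ :=
      ladder (EV.filter (fun v => v < v1)).card v1 hv1EV p1 hp1EX hp1ξ M hMmem xb hxbEX hMxb
        hv1ltM hp1le (by linarith) (le_refl _) (xb - 6) (by linarith) (by linarith)
    -- all prices in the window of qt are at most v1 ≤ u0 - τ
    have hqprice : ∀ z ∈ EZ, S (qt + z) ≤ v1 := by
      intro z hz
      have hpyq : 0 < pY EV EX EZ ν ζ ξ (qt + z) := pY_pos hν hζ hξnn hwqEV hqtEX hz hwqξ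
      refine priceLE _ _ hpyq ?_
      intro v hv x hx z' hz' hxz hp
      have hxlt : x < p1 := by
        have h1 : z ≤ 1 := (hZsub z hz).2
        have h2 : -1 ≤ z' := (hZsub z' hz').1
        linarith
      by_contra hvgt
      push_neg at hvgt
      have := mono v1 hv1EV p1 hp1EX hp1ξ v hv x hx hp hvgt
      linarith
    have hAqt : avgPrice EZ ζ S qt ≤ u0 - τ := le_trans (A_le qt v1 hqprice) hv1u
    -- the deviation inequality for the u0 insider
    have hdev := hopt' u0 hu0EV xb hxbEX hu0ξ qt hqtEX
    -- upper bound on the gain at the top order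
    have hub : u0 - avgPrice EZ ζ S xb ≤ (1 - ζ 1) * τ := by
      have hsum : ∑ z ∈ EZ, ζ z * (u0 - S (xb + z)) = u0 - avgPrice EZ ζ S xb := by
        simp only [mul_sub]
        rw [Finset.sum_sub_distrib, ← Finset.sum_mul, hζ1, one_mul]
        unfold avgPrice; ring
      have hsplit : ζ 1 * (u0 - S (xb + 1)) + ∑ z ∈ EZ.erase 1, ζ z * (u0 - S (xb + z))
          = ∑ z ∈ EZ, ζ z * (u0 - S (xb + z)) :=
        Finset.add_sum_erase EZ (fun z => ζ z * (u0 - S (xb + z))) hZp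
      have hζsplit : ζ 1 + ∑ z ∈ EZ.erase 1, ζ z = 1 := by
        rw [Finset.add_sum_erase EZ ζ hZp]; exact hζ1
      have h1 : ζ 1 * (u0 - S (xb + 1)) ≤ 0 :=
        mul_nonpos_of_nonneg_of_nonpos (le_of_lt hζ1pos) (by linarith)
      have h2 : ∑ z ∈ EZ.erase 1, ζ z * (u0 - S (xb + z)) ≤ ∑ z ∈ EZ.erase 1, ζ z * τ :=
        Finset.sum_le_sum fun z hz =>
          mul_le_mul_of_nonneg_left (hτge z hz) (le_of_lt (hζ z (Finset.mem_of_mem_erase hz)))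
      have h3 : ∑ z ∈ EZ.erase 1, ζ z * τ = (1 - ζ 1) * τ := by
        rw [← Finset.sum_mul]
        have : ∑ z ∈ EZ.erase 1, ζ z = 1 - ζ 1 := by linarith
        rw [this]
      linarith
    -- combine everything
    have hqtpos : (0:ℝ) < qt := by linarith
    have e1 : τ ≤ u0 - avgPrice EZ ζ S qt := by linarith
    have hlow : (xb - 6) * τ ≤ qt * (u0 - avgPrice EZ ζ S qt) := by
      calc (xb - 6) * τ ≤ qt * τ := mul_le_mul_of_nonneg_right hqtge (le_of_lt hτpos)
        _ ≤ qt * (u0 - avgPrice EZ ζ S qt) := mul_le_mul_of_nonneg_left e1 (le_of_lt hqtpos)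
    have hup : xb * (u0 - avgPrice EZ ζ S xb) ≤ xb * ((1 - ζ 1) * τ) :=
      mul_le_mul_of_nonneg_left hub (by linarith)
    have hcomb : (xb - 6) * τ ≤ (xb * (1 - ζ 1)) * τ := by
      have h' : xb * ((1 - ζ 1) * τ) = (xb * (1 - ζ 1)) * τ := by ring
      linarith [hlow, hdev, hup, h'.symm.le, h'.le]
    have hfac : xb - 6 ≤ xb * (1 - ζ 1) := (mul_le_mul_iff_of_pos_right hτpos).1 hcomb
    have hexp : xb * (1 - ζ 1) = xb - xb * ζ 1 := by ring
    have hle6 : xb * ζ 1 ≤ 6 := by linarith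
    have hxb6 : 6 + 6 / ζ 1 < xb := by linarith
    have hmul : (6 + 6 / ζ 1) * ζ 1 < xb * ζ 1 := mul_lt_mul_of_pos_right hxb6 hζ1pos
    have hexp2 : (6 + 6 / ζ 1) * ζ 1 = 6 * ζ 1 + 6 := by
      field_simp
    linarith
end

section
/- Consider the single-period Kyle game with E_V = {0, 1/2, 1} uniform, E_X = E_Z = {−1, 0, 1}, and noise distribution ζ = (6/8)δ_{−1} + (1/8)δ_0 + (1/8)δ_1. Then there is a unique Kyle equilibrium, given by the pure insider strategy ξ(v,·) = δ_{2v−1} and prices S(−2)=0, S(−1)=3/7, S(0)=13/16, S(1)=3/4, S(2)=1. In particular, the equilibrium price function is not monotone: S(0) > S(1). -/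
open Finset

/-- The equilibrium insider strategy of Example: buy if `v = 1`, do nothing if
`v = 1/2`, sell if `v = 0`, i.e. `ξ(v,·) = δ_{2v−1}`. -/
noncomputable def xiStar (v x : ℝ) : ℝ := if x = 2 * v - 1 then 1 else 0

/-- The equilibrium price function of the example. -/
noncomputable def SStar (y : ℝ) : ℝ :=
  if y = -2 then 0 else if y = -1 then 3 / 7 else if y = 0 then 13 / 16
  else if y = 1 then 3 / 4 else 1

lemma sum3 (f : ℝ → ℝ) : ∑ z ∈ ({-1, 0, 1} : Finset ℝ), f z = f (-1) + f 0 + f 1 := by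
  rw [show ({-1, 0, 1} : Finset ℝ) = insert (-1) (insert 0 {1}) from rfl,
    Finset.sum_insert (by norm_num), Finset.sum_insert (by norm_num), Finset.sum_singleton,
    add_assoc]

lemma sumV (f : ℝ → ℝ) : ∑ v ∈ ({0, 1/2, 1} : Finset ℝ), f v = f 0 + f (1/2) + f 1 := by
  rw [show ({0, 1/2, 1} : Finset ℝ) = insert 0 (insert (1/2) {1}) from rfl,
    Finset.sum_insert (by norm_num), Finset.sum_insert (by norm_num), Finset.sum_singleton,
    add_assoc]

section helpers
variable (ξ : ℝ → ℝ → ℝ) (S : ℝ → ℝ)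

lemma gain_eq (v x : ℝ) :
    gain {-1, 0, 1} (fun z => if z = -1 then 6/8 else 1/8) S v x
    = x * (v - (6 * S (x - 1) + S x + S (x + 1)) / 8) := by
  simp only [gain, avgPrice, sum3]
  rw [if_pos trivial, if_neg (by norm_num : ¬(0:ℝ) = -1), if_neg (by norm_num : ¬(1:ℝ) = -1),
    show x + -1 = x - 1 from by ring, add_zero]
  ring

lemma pY_m2 : pY {0, 1/2, 1} {-1, 0, 1} {-1, 0, 1} (fun _ => 1/3) (fun z => if z = -1 then 6/8 else 1/8) ξ (-2)
    = (6 * ξ 0 (-1) + 6 * ξ (1/2) (-1) + 6 * ξ 1 (-1)) / 24 := by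
  simp only [pY, sumV, sum3]; norm_num; ring

lemma pY_m1 : pY {0, 1/2, 1} {-1, 0, 1} {-1, 0, 1} (fun _ => 1/3) (fun z => if z = -1 then 6/8 else 1/8) ξ (-1)
    = (ξ 0 (-1) + 6 * ξ 0 0 + ξ (1/2) (-1) + 6 * ξ (1/2) 0 + ξ 1 (-1) + 6 * ξ 1 0) / 24 := by
  simp only [pY, sumV, sum3]; norm_num; ring

lemma pY_0 : pY {0, 1/2, 1} {-1, 0, 1} {-1, 0, 1} (fun _ => 1/3) (fun z => if z = -1 then 6/8 else 1/8) ξ 0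
    = (ξ 0 (-1) + ξ 0 0 + 6 * ξ 0 1 + ξ (1/2) (-1) + ξ (1/2) 0 + 6 * ξ (1/2) 1
       + ξ 1 (-1) + ξ 1 0 + 6 * ξ 1 1) / 24 := by
  simp only [pY, sumV, sum3]; norm_num; ring

lemma pY_1 : pY {0, 1/2, 1} {-1, 0, 1} {-1, 0, 1} (fun _ => 1/3) (fun z => if z = -1 then 6/8 else 1/8) ξ 1
    = (ξ 0 0 + ξ 0 1 + ξ (1/2) 0 + ξ (1/2) 1 + ξ 1 0 + ξ 1 1) / 24 := by
  simp only [pY, sumV, sum3]; norm_num; ring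

lemma pY_2 : pY {0, 1/2, 1} {-1, 0, 1} {-1, 0, 1} (fun _ => 1/3) (fun z => if z = -1 then 6/8 else 1/8) ξ 2
    = (ξ 0 1 + ξ (1/2) 1 + ξ 1 1) / 24 := by
  simp only [pY, sumV, sum3]; norm_num; ring

lemma pYV_m2 : pYV {0, 1/2, 1} {-1, 0, 1} {-1, 0, 1} (fun _ => 1/3) (fun z => if z = -1 then 6/8 else 1/8) ξ (-2)
    = (3 * ξ (1/2) (-1) + 6 * ξ 1 (-1)) / 24 := by
  simp only [pYV, sumV, sum3]; norm_num; ring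

lemma pYV_m1 : pYV {0, 1/2, 1} {-1, 0, 1} {-1, 0, 1} (fun _ => 1/3) (fun z => if z = -1 then 6/8 else 1/8) ξ (-1)
    = ((ξ (1/2) (-1) + 6 * ξ (1/2) 0) / 2 + ξ 1 (-1) + 6 * ξ 1 0) / 24 := by
  simp only [pYV, sumV, sum3]; norm_num; ring

lemma pYV_0 : pYV {0, 1/2, 1} {-1, 0, 1} {-1, 0, 1} (fun _ => 1/3) (fun z => if z = -1 then 6/8 else 1/8) ξ 0
    = ((ξ (1/2) (-1) + ξ (1/2) 0 + 6 * ξ (1/2) 1) / 2 + ξ 1 (-1) + ξ 1 0 + 6 * ξ 1 1) / 24 := by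
  simp only [pYV, sumV, sum3]; norm_num; ring

lemma pYV_1 : pYV {0, 1/2, 1} {-1, 0, 1} {-1, 0, 1} (fun _ => 1/3) (fun z => if z = -1 then 6/8 else 1/8) ξ 1
    = ((ξ (1/2) 0 + ξ (1/2) 1) / 2 + ξ 1 0 + ξ 1 1) / 24 := by
  simp only [pYV, sumV, sum3]; norm_num; ring

lemma pYV_2 : pYV {0, 1/2, 1} {-1, 0, 1} {-1, 0, 1} (fun _ => 1/3) (fun z => if z = -1 then 6/8 else 1/8) ξ 2
    = (ξ (1/2) 1 / 2 + ξ 1 1) / 24 := by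
  simp only [pYV, sumV, sum3]; norm_num; ring

lemma pY_zero (y : ℝ) (h1 : y ≠ -2) (h2 : y ≠ -1) (h3 : y ≠ 0) (h4 : y ≠ 1) (h5 : y ≠ 2) :
    pY {0, 1/2, 1} {-1, 0, 1} {-1, 0, 1} (fun _ => 1/3) (fun z => if z = -1 then 6/8 else 1/8) ξ y = 0 := by
  simp only [pY, sumV, sum3]
  norm_num [Ne.symm h1, Ne.symm h2, Ne.symm h3, Ne.symm h4, Ne.symm h5]

end helpers

lemma mem_V0 : (0:ℝ) ∈ ({0, 1/2, 1} : Finset ℝ) := by norm_num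
lemma mem_Vh : (1/2:ℝ) ∈ ({0, 1/2, 1} : Finset ℝ) := by norm_num
lemma mem_V1 : (1:ℝ) ∈ ({0, 1/2, 1} : Finset ℝ) := by norm_num
lemma mem_Xm : (-1:ℝ) ∈ ({-1, 0, 1} : Finset ℝ) := by norm_num
lemma mem_X0 : (0:ℝ) ∈ ({-1, 0, 1} : Finset ℝ) := by norm_num
lemma mem_Xp : (1:ℝ) ∈ ({-1, 0, 1} : Finset ℝ) := by norm_num

lemma existence : IsKyleEquilibrium {0, 1 / 2, 1} {-1, 0, 1} {-1, 0, 1}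
    (fun _ => 1 / 3) (fun z => if z = -1 then 6 / 8 else 1 / 8) xiStar SStar := by
  refine ⟨?_, ?_, ?_⟩
  · intro v hv
    simp only [Finset.mem_insert, Finset.mem_singleton] at hv
    constructor
    · intro x hx
      unfold xiStar; split <;> norm_num
    · rcases hv with rfl | rfl | rfl <;> rw [sum3] <;> norm_num [xiStar]
  · intro v hv x hx hpos x' hx'
    simp only [Finset.mem_insert, Finset.mem_singleton] at hv hx hx'
    rcases hv with rfl | rfl | rfl <;> rcases hx with rfl | rfl | rfl <;>
      (try (norm_num [xiStar] at hpos)) <;>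
      rcases hx' with rfl | rfl | rfl <;>
      simp only [gain_eq] <;> norm_num [SStar]
  · intro y hy
    have hmem : y = -2 ∨ y = -1 ∨ y = 0 ∨ y = 1 ∨ y = 2 := by
      by_contra h
      push_neg at h
      obtain ⟨h1, h2, h3, h4, h5⟩ := h
      rw [pY_zero xiStar y h1 h2 h3 h4 h5] at hy
      exact lt_irrefl 0 hy
    rcases hmem with rfl | rfl | rfl | rfl | rfl
    · rw [pY_m2, pYV_m2]; norm_num [xiStar, SStar]
    · rw [pY_m1, pYV_m1]; norm_num [xiStar, SStar]
    · rw [pY_0, pYV_0]; norm_num [xiStar, SStar]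
    · rw [pY_1, pYV_1]; norm_num [xiStar, SStar]
    · rw [pY_2, pYV_2]; norm_num [xiStar, SStar]

set_option maxHeartbeats 2000000 in
lemma uniqueness (ξ : ℝ → ℝ → ℝ) (S : ℝ → ℝ) (hS : ∀ y, 0 ≤ S y ∧ S y ≤ 1)
    (h : IsKyleEquilibrium {0, 1 / 2, 1} {-1, 0, 1} {-1, 0, 1}
      (fun _ => 1 / 3) (fun z => if z = -1 then 6 / 8 else 1 / 8) ξ S) :
    (∀ v ∈ ({0, 1 / 2, 1} : Finset ℝ), ∀ x ∈ ({-1, 0, 1} : Finset ℝ), ξ v x = xiStar v x) ∧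
    (∀ y ∈ ({-2, -1, 0, 1, 2} : Finset ℝ), S y = SStar y) := by
  obtain ⟨hstrat, hopt, hprice⟩ := h
  obtain ⟨hnn0, hsum0⟩ := hstrat 0 mem_V0
  obtain ⟨hnnh, hsumh⟩ := hstrat (1/2) mem_Vh
  obtain ⟨hnn1, hsum1⟩ := hstrat 1 mem_V1
  rw [sum3] at hsum0 hsumh hsum1
  have s1n := hnn0 _ mem_Xm; have s2n := hnn0 _ mem_X0; have s3n := hnn0 _ mem_Xp
  have pn := hnnh _ mem_Xm; have qn := hnnh _ mem_X0; have rn := hnnh _ mem_Xp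
  have t1n := hnn1 _ mem_Xm; have t2n := hnn1 _ mem_X0; have t3n := hnn1 _ mem_Xp
  obtain ⟨Sm2n, Sm2u⟩ := hS (-2); obtain ⟨Sm1n, Sm1u⟩ := hS (-1)
  obtain ⟨S0n, S0u⟩ := hS 0; obtain ⟨S1n, S1u⟩ := hS 1; obtain ⟨S2n, S2u⟩ := hS 2
  have gopt : ∀ v x x' : ℝ, v ∈ ({0, 1/2, 1} : Finset ℝ) → x ∈ ({-1, 0, 1} : Finset ℝ) →
      x' ∈ ({-1, 0, 1} : Finset ℝ) → 0 < ξ v x →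
      x' * (v - (6 * S (x' - 1) + S x' + S (x' + 1)) / 8)
        ≤ x * (v - (6 * S (x - 1) + S x + S (x + 1)) / 8) := by
    intro v x x' hv hx hx' hpos
    have hg := hopt v hv x hx hpos x' hx'
    simp only [gain_eq] at hg
    exact hg
  -- Step A : ξ 0 1 = 0
  have hs3 : ξ 0 1 = 0 := by
    by_contra hc
    have hpos : 0 < ξ 0 1 := s3n.lt_of_ne (Ne.symm hc)
    have g1 := gopt 0 1 (-1) mem_V0 mem_Xp mem_Xm hpos
    have g2 := gopt 0 1 0 mem_V0 mem_Xp mem_X0 hpos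
    norm_num at g1 g2
    have z0 : S 0 = 0 := by linarith
    have z1 : S 1 = 0 := by linarith
    have z2 : S 2 = 0 := by linarith
    have zm2 : S (-2) = 0 := by linarith
    have zm1 : S (-1) = 0 := by linarith
    have ht : 0 < ξ 1 (-1) ∨ 0 < ξ 1 0 ∨ 0 < ξ 1 1 := by
      by_contra hc2
      push_neg at hc2
      obtain ⟨u1, u2, u3⟩ := hc2
      linarith
    rcases ht with ht | ht | ht
    · have hp : 0 < pY {0, 1/2, 1} {-1, 0, 1} {-1, 0, 1} (fun _ => 1/3)
          (fun z => if z = -1 then 6/8 else 1/8) ξ (-2) := by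
        rw [pY_m2]; linarith
      have he := hprice _ hp
      rw [pY_m2, pYV_m2, zm2] at he
      linarith
    · have hp : 0 < pY {0, 1/2, 1} {-1, 0, 1} {-1, 0, 1} (fun _ => 1/3)
          (fun z => if z = -1 then 6/8 else 1/8) ξ (-1) := by
        rw [pY_m1]; linarith
      have he := hprice _ hp
      rw [pY_m1, pYV_m1, zm1] at he
      linarith
    · have hp : 0 < pY {0, 1/2, 1} {-1, 0, 1} {-1, 0, 1} (fun _ => 1/3)
          (fun z => if z = -1 then 6/8 else 1/8) ξ 0 := by
        rw [pY_0]; linarith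
      have he := hprice _ hp
      rw [pY_0, pYV_0, z0] at he
      linarith
  -- Step B : ξ 1 (-1) = 0
  have ht1 : ξ 1 (-1) = 0 := by
    by_contra hc
    have hpos : 0 < ξ 1 (-1) := t1n.lt_of_ne (Ne.symm hc)
    have g1 := gopt 1 (-1) 0 mem_V1 mem_Xm mem_X0 hpos
    norm_num at g1
    have o0 : S 0 = 1 := by linarith
    have om1 : S (-1) = 1 := by linarith
    have om2 : S (-2) = 1 := by linarith
    have hs : 0 < ξ 0 (-1) ∨ 0 < ξ 0 0 := by
      by_contra hc2
      push_neg at hc2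
      obtain ⟨u1, u2⟩ := hc2
      linarith
    rcases hs with hsc | hsc
    · have hp : 0 < pY {0, 1/2, 1} {-1, 0, 1} {-1, 0, 1} (fun _ => 1/3)
          (fun z => if z = -1 then 6/8 else 1/8) ξ (-2) := by
        rw [pY_m2]; linarith
      have he := hprice _ hp
      rw [pY_m2, pYV_m2, om2] at he
      linarith
    · have hp : 0 < pY {0, 1/2, 1} {-1, 0, 1} {-1, 0, 1} (fun _ => 1/3)
          (fun z => if z = -1 then 6/8 else 1/8) ξ (-1) := by
        rw [pY_m1]; linarith
      have he := hprice _ hp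
      rw [pY_m1, pYV_m1, om1] at he
      linarith
  -- Step C : ξ 0 0 = 0, ξ 0 (-1) = 1
  have hs2 : ξ 0 0 = 0 := by
    by_contra hc
    have hpos : 0 < ξ 0 0 := s2n.lt_of_ne (Ne.symm hc)
    have g1 := gopt 0 0 (-1) mem_V0 mem_X0 mem_Xm hpos
    norm_num at g1
    have zm2 : S (-2) = 0 := by linarith
    have zm1 : S (-1) = 0 := by linarith
    have z0 : S 0 = 0 := by linarith
    have hp : 0 < pY {0, 1/2, 1} {-1, 0, 1} {-1, 0, 1} (fun _ => 1/3)
        (fun z => if z = -1 then 6/8 else 1/8) ξ 0 := by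
      rw [pY_0]; linarith
    have he := hprice _ hp
    rw [pY_0, pYV_0, z0] at he
    linarith
  have hs1 : ξ 0 (-1) = 1 := by linarith
  -- Step D : ξ 1 0 = 0, ξ 1 1 = 1
  have ht2 : ξ 1 0 = 0 := by
    by_contra hc
    have hpos : 0 < ξ 1 0 := t2n.lt_of_ne (Ne.symm hc)
    have g1 := gopt 1 0 1 mem_V1 mem_X0 mem_Xp hpos
    norm_num at g1
    have o0 : S 0 = 1 := by linarith
    have hp : 0 < pY {0, 1/2, 1} {-1, 0, 1} {-1, 0, 1} (fun _ => 1/3)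
        (fun z => if z = -1 then 6/8 else 1/8) ξ 0 := by
      rw [pY_0]; linarith
    have he := hprice _ hp
    rw [pY_0, pYV_0, o0] at he
    linarith
  have ht3 : ξ 1 1 = 1 := by linarith
  -- price equations
  have hpm2 : 0 < pY {0, 1/2, 1} {-1, 0, 1} {-1, 0, 1} (fun _ => 1/3)
      (fun z => if z = -1 then 6/8 else 1/8) ξ (-2) := by rw [pY_m2]; linarith
  have hpm1 : 0 < pY {0, 1/2, 1} {-1, 0, 1} {-1, 0, 1} (fun _ => 1/3)
      (fun z => if z = -1 then 6/8 else 1/8) ξ (-1) := by rw [pY_m1]; linarith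
  have hp0 : 0 < pY {0, 1/2, 1} {-1, 0, 1} {-1, 0, 1} (fun _ => 1/3)
      (fun z => if z = -1 then 6/8 else 1/8) ξ 0 := by rw [pY_0]; linarith
  have hp1 : 0 < pY {0, 1/2, 1} {-1, 0, 1} {-1, 0, 1} (fun _ => 1/3)
      (fun z => if z = -1 then 6/8 else 1/8) ξ 1 := by rw [pY_1]; linarith
  have hp2 : 0 < pY {0, 1/2, 1} {-1, 0, 1} {-1, 0, 1} (fun _ => 1/3)
      (fun z => if z = -1 then 6/8 else 1/8) ξ 2 := by rw [pY_2]; linarith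
  have Em2 := hprice _ hpm2
  have Em1 := hprice _ hpm1
  have E0 := hprice _ hp0
  have E1 := hprice _ hp1
  have E2 := hprice _ hp2
  rw [pY_m2, pYV_m2] at Em2
  rw [pY_m1, pYV_m1] at Em1
  rw [pY_0, pYV_0] at E0
  rw [pY_1, pYV_1] at E1
  rw [pY_2, pYV_2] at E2
  simp only [hs1, hs2, hs3, ht1, ht2, ht3] at Em2 Em1 E0 E1 E2
  norm_num at Em2 Em1 E0 E1 E2
  -- Step F : ξ (1/2) (-1) = 0
  have hp' : ξ (1/2) (-1) ≤ 1 := by linarith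
  have hq' : ξ (1/2) 0 ≤ 1 := by linarith
  have hr' : ξ (1/2) 1 ≤ 1 := by linarith
  have hpneg : ξ (1/2) (-1) = 0 := by
    by_contra hc
    have hpos : 0 < ξ (1/2) (-1) := pn.lt_of_ne (Ne.symm hc)
    have g1 := gopt (1/2) (-1) 0 mem_Vh mem_Xm mem_X0 hpos
    norm_num at g1
    have b1 : S (-2) ≤ 1/4 := by nlinarith [Em2]
    have b2 : S (-1) ≤ 3/7 := by nlinarith [Em1]
    have b3 : S 0 ≤ 6/7 := by nlinarith [E0]
    linarith
  -- Step G : ξ (1/2) 1 = 0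
  have hrneg : ξ (1/2) 1 = 0 := by
    by_contra hc
    have hpos : 0 < ξ (1/2) 1 := rn.lt_of_ne (Ne.symm hc)
    have g1 := gopt (1/2) 1 0 mem_Vh mem_Xp mem_X0 hpos
    norm_num at g1
    have b3 : 9/13 ≤ S 0 := by nlinarith [E0]
    have b4 : 1/2 ≤ S 1 := by nlinarith [E1]
    have b5 : 1/2 ≤ S 2 := by nlinarith [E2]
    linarith
  have hqone : ξ (1/2) 0 = 1 := by linarith
  -- final S values
  simp only [hpneg, hqone, hrneg] at Em2 Em1 E0 E1 E2
  norm_num at Em2 Em1 E0 E1 E2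
  have vSm2 : S (-2) = 0 := by linarith
  have vSm1 : S (-1) = 3/7 := by linarith
  have vS0 : S 0 = 13/16 := by linarith
  have vS1 : S 1 = 3/4 := by linarith
  have vS2 : S 2 = 1 := by linarith
  constructor
  · intro v hv x hx
    simp only [Finset.mem_insert, Finset.mem_singleton] at hv hx
    rcases hv with rfl | rfl | rfl <;> rcases hx with rfl | rfl | rfl <;>
      norm_num [xiStar] <;> linarith
  · intro y hy
    simp only [Finset.mem_insert, Finset.mem_singleton] at hy
    rcases hy with rfl | rfl | rfl | rfl | rfl <;> norm_num [SStar] <;> linarith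


/-- In the single-period Kyle game with uniform true value on `{0, 1/2, 1}`,
actions `E_X = E_Z = {−1,0,1}` and bearish noise `ζ = (6/8)δ₋₁ + (1/8)δ₀ +
(1/8)δ₁`, the Kyle equilibrium exists, is unique, and its price function is not
monotone: `S(1) < S(0)`. -/
theorem unique_equilibrium_nonmonotone_price :
    IsKyleEquilibrium {0, 1 / 2, 1} {-1, 0, 1} {-1, 0, 1}
      (fun _ => 1 / 3) (fun z => if z = -1 then 6 / 8 else 1 / 8) xiStar SStar ∧
    (∀ (ξ : ℝ → ℝ → ℝ) (S : ℝ → ℝ), (∀ y, 0 ≤ S y ∧ S y ≤ 1) →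
      IsKyleEquilibrium {0, 1 / 2, 1} {-1, 0, 1} {-1, 0, 1}
        (fun _ => 1 / 3) (fun z => if z = -1 then 6 / 8 else 1 / 8) ξ S →
      (∀ v ∈ ({0, 1 / 2, 1} : Finset ℝ), ∀ x ∈ ({-1, 0, 1} : Finset ℝ),
        ξ v x = xiStar v x) ∧
      (∀ y ∈ ({-2, -1, 0, 1, 2} : Finset ℝ), S y = SStar y)) ∧
    SStar 1 < SStar 0 := by
  exact ⟨existence, fun ξ S hS h => uniqueness ξ S hS h, by norm_num [SStar]⟩
end
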